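/- For every k ∈ ℕ there exists R(k) ∈ ℕ such that the following holds: for every 3-uniform hypergraph H with vertex set ℕ and every set S ⊆ ℕ with |S| = k, there exists a valuation tree of height at most R(k) containing all the matrices A^i for i ∈ S. -/

import Mathlib

open scoped Classical

section AbstractTrees

variable {α : Type*} [PartialOrder α]

/-- The set of strict predecessors of `t` inside `U`. -/
def predsIn (U : Set α) (t : α) : Set α := {s ∈ U | s < t}

/-- The level of a node `t` in the tree `U`: the number of its strict predecessors in `U`. -/
noncomputable def levelIn (U : Set α) (t : α) : ℕ := (predsIn U t).ncard

/-- `U` is a tree: the set of strict predecessors of every node is finite and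
linearly ordered. -/
def IsTreeOn (U : Set α) : Prop :=
  ∀ t ∈ U, (predsIn U t).Finite ∧
    ∀ s₁ ∈ predsIn U t, ∀ s₂ ∈ predsIn U t, s₁ ≤ s₂ ∨ s₂ ≤ s₁

/-- The height of the tree `U`: the least `n` such that `U` has no node of level `n`
(equivalently, for trees, the supremum of `level + 1`), or `ω = ⊤` if there is no such `n`. -/
noncomputable def heightIn (U : Set α) : ℕ∞ :=
  ⨆ t ∈ U, ((levelIn U t : ℕ∞) + 1)

/-- The level set `L_U(D)` of `D` in `U`. -/
def levelSetIn (U D : Set α) : Set ℕ := levelIn U '' D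

/-- `t` is a maximal node of `U`. -/
def IsMaximalIn (U : Set α) (t : α) : Prop := t ∈ U ∧ ∀ s ∈ U, ¬ t < s

/-- `U` is rooted: it has a unique minimal element below all of its nodes. -/
def IsRootedIn (U : Set α) : Prop := ∃ r ∈ U, ∀ t ∈ U, r ≤ t

/-- `U` is balanced: either it has infinite height and no maximal nodes, or all its
maximal nodes lie on level `h(U) - 1`. -/
def IsBalanced (U : Set α) : Prop :=
  (heightIn U = ⊤ ∧ ∀ t, ¬ IsMaximalIn U t) ∨
  (heightIn U ≠ ⊤ ∧ ∀ t, IsMaximalIn U t → ((levelIn U t : ℕ∞) + 1 = heightIn U))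

/-- `m` is the meet `s ∧_U t` of `s` and `t` in `U`. -/
def IsMeetIn (U : Set α) (s t m : α) : Prop :=
  m ∈ U ∧ m ≤ s ∧ m ≤ t ∧ ∀ m' ∈ U, m' ≤ s → m' ≤ t → m' ≤ m

/-- `S` is a subtree of `U`: a subset closed under binary meets (taken in `U`). -/
def IsSubtreeOf (U S : Set α) : Prop :=
  S ⊆ U ∧ ∀ s ∈ S, ∀ t ∈ S, ∃ m ∈ S, IsMeetIn U s t m

/-- `t` is an immediate successor of `s` in `U`. -/
def IsImmSuccIn (U : Set α) (s t : α) : Prop :=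
  s ∈ U ∧ t ∈ U ∧ s < t ∧ ∀ u ∈ U, s < u → ¬ u < t

/-- `U` is finitely branching. -/
def IsFinBranching (U : Set α) : Prop :=
  ∀ t ∈ U, {s | IsImmSuccIn U t s}.Finite

/-- `S` is a strong subtree of `U`: it is a subtree which is either empty, or is
rooted, balanced, has each of its levels contained in a single level of `U`, and for every
non-maximal node `s ∈ S` and every immediate successor `t` of `s` in `U` there is exactly
one immediate successor of `s` in `S` above `t`. -/
def IsStrongSubtreeOf (U S : Set α) : Prop :=
  IsSubtreeOf U S ∧
  (S = ∅ ∨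
    (IsRootedIn S ∧ IsBalanced S ∧
      (∀ s ∈ S, ∀ t ∈ S, levelIn S s = levelIn S t → levelIn U s = levelIn U t) ∧
      (∀ s ∈ S, ¬ IsMaximalIn S s → ∀ t, IsImmSuccIn U s t →
        ∃! c, IsImmSuccIn S s c ∧ t ≤ c)))

end AbstractTrees

/-- A finite `{0,1}`-vector: a function `len → Bool`, represented with total entry
function which vanishes from index `len` on. Nodes of the tree `T₁`. -/
structure Vec where
  len : ℕ
  entry : ℕ → Bool
  outside : ∀ i, len ≤ i → entry i = false

/-- A finite strictly lower triangular square `{0,1}`-matrix: a function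
`size × size → Bool` with `entry i j = 0` for `i ≤ j`, represented with a total entry
function which vanishes outside. Nodes of the tree `T₂`. -/
structure Mat where
  size : ℕ
  entry : ℕ → ℕ → Bool
  lower : ∀ i j, i ≤ j → entry i j = false
  outside : ∀ i j, size ≤ i → entry i j = false

/-- The tree order on `T₁`: end-extension of finite `{0,1}`-vectors. -/
instance : PartialOrder Vec where
  le u v := u.len ≤ v.len ∧ ∀ i, i < u.len → u.entry i = v.entry i
  le_refl u := ⟨le_rfl, fun _ _ => rfl⟩
  le_trans u v w h h' :=
    ⟨h.1.trans h'.1, fun i hi => (h.2 i hi).trans (h'.2 i (lt_of_lt_of_le hi h.1))⟩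
  le_antisymm u v h h' := by
    have hl : u.len = v.len := le_antisymm h.1 h'.1
    have he : u.entry = v.entry := by
      funext i
      by_cases hi : i < u.len
      · exact h.2 i hi
      · rw [u.outside i (not_lt.mp hi), v.outside i (by omega)]
    cases u; cases v
    simp only at hl he
    subst hl; subst he; rfl

/-- The tree order on `T₂`: extension of strictly lower triangular `{0,1}`-matrices. -/
instance : PartialOrder Mat where
  le A B := A.size ≤ B.size ∧ ∀ i j, i < A.size → j < A.size → A.entry i j = B.entry i j
  le_refl A := ⟨le_rfl, fun _ _ _ _ => rfl⟩
  le_trans A B C h h' :=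
    ⟨h.1.trans h'.1, fun i j hi hj => (h.2 i j hi hj).trans
      (h'.2 i j (lt_of_lt_of_le hi h.1) (lt_of_lt_of_le hj h.1))⟩
  le_antisymm A B h h' := by
    have hl : A.size = B.size := le_antisymm h.1 h'.1
    have he : A.entry = B.entry := by
      funext i j
      by_cases hi : i < A.size
      · by_cases hj : j < A.size
        · exact h.2 i j hi hj
        · -- j ≥ A.size and i < A.size, so i < j and both entries vanish
          rw [A.lower i j (by omega), B.lower i j (by omega)]
      · rw [A.outside i j (not_lt.mp hi), B.outside i j (by omega)]
    cases A; cases B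
    simp only at hl he
    subst hl; subst he; rfl

/-- The extension `A⌢v` of an `n × n` matrix `A` by a vector `v` of length `n`:
the `(n+1) × (n+1)` matrix extending `A` whose last row is `v` followed by `0` and whose
last column is zero. -/
def matExtend (A : Mat) (v : Vec) : Mat where
  size := A.size + 1
  entry := fun i j =>
    if i < A.size then A.entry i j
    else if i = A.size ∧ j < A.size then v.entry j else false
  lower := by
    intro i j hij
    by_cases h1 : i < A.size
    · simp only [if_pos h1]
      exact A.lower i j hij
    · show (if i < A.size then A.entry i j
          else if i = A.size ∧ j < A.size then v.entry j else false) = false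
      rw [if_neg h1, if_neg (by omega)]
  outside := by
    intro i j hi
    show (if i < A.size then A.entry i j
        else if i = A.size ∧ j < A.size then v.entry j else false) = false
    rw [if_neg (by omega), if_neg (by omega)]

/-- The `m`-th row of a matrix `A`, as a `{0,1}`-vector of length `|A|`. -/
def rowOf (A : Mat) (m : ℕ) : Vec where
  len := A.size
  entry := fun l => A.entry m l
  outside := by
    intro l hl
    rcases le_or_gt m l with h | h
    · exact A.lower m l h
    · exact A.outside m l (hl.trans h.le)
/-- A 3-uniform hypergraph on a vertex set `V`: a set of hyperedges, each a 3-element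
subset of `V`. -/
structure HGraph (V : Type*) where
  edges : Set (Finset V)
  card_eq : ∀ e ∈ edges, e.card = 3

/-- An embedding of 3-uniform hypergraphs: an injective map `f` between the vertex sets
such that `{x, y, z}` is a hyperedge if and only if `{f x, f y, f z}` is a hyperedge. -/
def IsHGEmbedding {V W : Type*} (A : HGraph V) (B : HGraph W) (f : V → W) : Prop :=
  Function.Injective f ∧
    ∀ x y z : V, ({x, y, z} : Finset V) ∈ A.edges ↔ ({f x, f y, f z} : Finset W) ∈ B.edges

/-- The 3-uniform hypergraph `G`: its vertices are the nodes of the tree `T₂`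
(i.e. finite strictly lower triangular `{0,1}`-matrices), and `{A, B, C}` is a hyperedge
if and only if `|A| < |B| < |C|` and `C_{|B|, |A|} = 1`. -/
noncomputable def Ghyp : HGraph Mat where
  edges := {e | ∃ A B C : Mat, e = {A, B, C} ∧
    A.size < B.size ∧ B.size < C.size ∧ C.entry B.size A.size = true}
  card_eq := by
    rintro e ⟨A, B, C, rfl, h1, h2, -⟩
    refine Finset.card_eq_three.mpr ⟨A, B, C, ?_, ?_, ?_, rfl⟩
    · exact fun h => absurd (congrArg Mat.size h) (by omega)
    · exact fun h => absurd (congrArg Mat.size h) (by omega)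
    · exact fun h => absurd (congrArg Mat.size h) (by omega)

/-- Given a 3-uniform hypergraph `H` on `ℕ`, the matrix `A^i` assigned to the vertex
`i`: the `(2i+1) × (2i+1)` strictly lower triangular `{0,1}`-matrix with
`A^i_{2k+1, 2j} = A^i_{2k+1, 2j+1} = 1` for every hyperedge `{j, k, i}` of `H` with
`j < k < i`, and all other entries `0`. -/
noncomputable def matOf (H : HGraph ℕ) (i : ℕ) : Mat where
  size := 2 * i + 1
  entry := fun r c =>
    if r % 2 = 1 ∧ c / 2 < r / 2 ∧ r / 2 < i ∧ ({c / 2, r / 2, i} : Finset ℕ) ∈ H.edges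
    then true else false
  lower := by
    intro r c hrc
    show (if r % 2 = 1 ∧ c / 2 < r / 2 ∧ r / 2 < i ∧ ({c / 2, r / 2, i} : Finset ℕ) ∈ H.edges
        then true else false) = false
    rw [if_neg]
    rintro ⟨h1, h2, h3, -⟩
    omega
  outside := by
    intro r c hr
    show (if r % 2 = 1 ∧ c / 2 < r / 2 ∧ r / 2 < i ∧ ({c / 2, r / 2, i} : Finset ℕ) ∈ H.edges
        then true else false) = false
    rw [if_neg]
    rintro ⟨h1, h2, h3, -⟩
    omega

/-- The valuation tree `val(S₁, S₂)` corresponding to a vector strong subtree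
`(S₁, S₂)` of `(T₁, T₂)`, as a predicate: the root of `S₂` belongs to it, and whenever
`A` belongs to it, `v ∈ S₁(|A|_{S₂})` and `{C} = ImmSucc_{S₂}(A) ∩ Succ_{T₂}(A⌢v)`,
then `C` belongs to it. -/
inductive InVal (S₁ : Set Vec) (S₂ : Set Mat) : Mat → Prop where
  | root (A : Mat) (hA : A ∈ S₂) (hroot : ∀ B ∈ S₂, A ≤ B) : InVal S₁ S₂ A
  | step (A : Mat) (v : Vec) (C : Mat) (hA : InVal S₁ S₂ A) (hv : v ∈ S₁)
      (hlev : levelIn S₁ v = levelIn S₂ A)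
      (hC : IsImmSuccIn S₂ A C ∧ matExtend A v ≤ C)
      (huniq : ∀ C' : Mat, IsImmSuccIn S₂ A C' ∧ matExtend A v ≤ C' → C' = C) :
      InVal S₁ S₂ C

/-- `(S₁, S₂)` is a vector strong subtree of the vector tree `(T₁, T₂)`:
both coordinates are strong subtrees of the respective (ambient) trees and the pair is
level compatible, i.e. `L_{T₁}(S₁) = L_{T₂}(S₂)`. -/
def IsVecStrongPair (S₁ : Set Vec) (S₂ : Set Mat) : Prop :=
  IsStrongSubtreeOf Set.univ S₁ ∧ IsStrongSubtreeOf Set.univ S₂ ∧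
    levelSetIn Set.univ S₁ = levelSetIn Set.univ S₂

/-- A subset of `T₂` is a valuation tree if it equals `val(S₁, S₂)` for some vector
strong subtree `(S₁, S₂)` of `(T₁, T₂)`. -/
def IsValTree (T : Set Mat) : Prop :=
  ∃ S₁ S₂, IsVecStrongPair S₁ S₂ ∧ T = {C | InVal S₁ S₂ C}

/-- A structural isomorphism between subtrees `T` and `T'` of `T₂`: an isomorphism of
trees preserving relative heights of nodes such that, for all `A, B, C ∈ T` with
`|A| ≤ |B| < |C|`, one has `f(C)_{|f(B)|, |f(A)|} = C_{|B|, |A|}`. -/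
structure IsStructIso (T T' : Set Mat) (f : Mat → Mat) : Prop where
  mapsTo : ∀ A ∈ T, f A ∈ T'
  injOn : ∀ A ∈ T, ∀ B ∈ T, f A = f B → A = B
  surjOn : ∀ C ∈ T', ∃ A ∈ T, f A = C
  orderIso : ∀ A ∈ T, ∀ B ∈ T, (A ≤ B ↔ f A ≤ f B)
  levelEq : ∀ A ∈ T, levelIn T A = levelIn T' (f A)
  passing : ∀ A ∈ T, ∀ B ∈ T, ∀ C ∈ T, A.size ≤ B.size → B.size < C.size →
    (f C).entry (f B).size (f A).size = C.entry B.size A.size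

/-! ### Auxiliary development for the envelope theorem -/

section EnvAux

lemma Vec.ext'' {u v : Vec} (hl : u.len = v.len) (he : u.entry = v.entry) : u = v := by
  cases u; cases v; simp_all

lemma Vec.eq_of {u v : Vec} (hl : u.len = v.len)
    (he : ∀ i, i < u.len → u.entry i = v.entry i) : u = v := by
  refine Vec.ext'' hl (funext fun i => ?_)
  by_cases h : i < u.len
  · exact he i h
  · rw [u.outside i (le_of_not_gt h), v.outside i (by omega)]

lemma Mat.ext'' {A B : Mat} (hl : A.size = B.size) (he : A.entry = B.entry) : A = B := by
  cases A; cases B; simp_all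

lemma Mat.eq_of {A B : Mat} (hl : A.size = B.size)
    (he : ∀ r c, r < A.size → c < r → A.entry r c = B.entry r c) : A = B := by
  refine Mat.ext'' hl (funext fun r => funext fun c => ?_)
  by_cases hr : r < A.size
  · by_cases hc : c < r
    · exact he r c hr hc
    · rw [A.lower r c (by omega), B.lower r c (by omega)]
  · rw [A.outside r c (le_of_not_gt hr), B.outside r c (by omega)]

lemma vecLe_def {u v : Vec} : u ≤ v ↔ u.len ≤ v.len ∧ ∀ i, i < u.len → u.entry i = v.entry i :=
  Iff.rfl

lemma matLe_def {A B : Mat} :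
    A ≤ B ↔ A.size ≤ B.size ∧ ∀ i j, i < A.size → j < A.size → A.entry i j = B.entry i j :=
  Iff.rfl

lemma matLe_entry {A B : Mat} (h : A ≤ B) {r c : ℕ} (hr : r < A.size) :
    A.entry r c = B.entry r c := by
  by_cases hc : c < r
  · exact h.2 r c hr (by omega)
  · rw [A.lower r c (by omega), B.lower r c (by omega)]

lemma vecLt_len {u v : Vec} (h : u < v) : u.len < v.len := by
  rcases lt_or_eq_of_le h.le.1 with h' | h'
  · exact h'
  · exact absurd (Vec.eq_of h' h.le.2) h.ne

lemma matLt_size {A B : Mat} (h : A < B) : A.size < B.size := by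
  rcases lt_or_eq_of_le h.le.1 with h' | h'
  · exact h'
  · refine absurd (Mat.eq_of h' fun r c hr hc => h.le.2 r c hr (by omega)) h.ne

/-- Truncation of a vector to length `n`. -/
def truncV (u : Vec) (n : ℕ) : Vec where
  len := n
  entry := fun i => if i < n then u.entry i else false
  outside := fun i hi => if_neg (by omega)

/-- Truncation of a matrix to size `n`. -/
def truncM (A : Mat) (n : ℕ) : Mat where
  size := n
  entry := fun i j => if i < n then A.entry i j else false
  lower := fun i j hij => by
    by_cases h : i < n
    · simpa [h] using A.lower i j hij
    · simp [h]
  outside := fun i j hi => if_neg (by omega)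

@[simp] lemma truncV_len (u : Vec) (n : ℕ) : (truncV u n).len = n := rfl
@[simp] lemma truncV_entry (u : Vec) (n : ℕ) (i : ℕ) :
    (truncV u n).entry i = if i < n then u.entry i else false := rfl
@[simp] lemma truncM_size (A : Mat) (n : ℕ) : (truncM A n).size = n := rfl
@[simp] lemma truncM_entry (A : Mat) (n : ℕ) (i j : ℕ) :
    (truncM A n).entry i j = if i < n then A.entry i j else false := rfl

lemma truncV_le (u : Vec) {n : ℕ} (hn : n ≤ u.len) : truncV u n ≤ u :=
  ⟨hn, fun i hi => by simp [truncV] at hi ⊢; simp [hi]⟩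

lemma truncM_le (A : Mat) {n : ℕ} (hn : n ≤ A.size) : truncM A n ≤ A :=
  ⟨hn, fun i j hi _ => by simp at hi; simp [hi]⟩

lemma truncV_self (u : Vec) : truncV u u.len = u :=
  Vec.eq_of rfl (fun i hi => by simp at hi ⊢; simp [hi])

lemma truncM_self (A : Mat) : truncM A A.size = A :=
  Mat.eq_of rfl (fun r c hr _ => by simp at hr ⊢; simp [hr])

lemma truncV_truncV (u : Vec) {m n : ℕ} (h : m ≤ n) :
    truncV (truncV u n) m = truncV u m :=
  Vec.eq_of rfl (fun i hi => by simp at hi ⊢; simp [hi, show i < n by omega])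

lemma truncM_truncM (A : Mat) {m n : ℕ} (h : m ≤ n) :
    truncM (truncM A n) m = truncM A m :=
  Mat.eq_of rfl (fun r c hr _ => by simp at hr ⊢; simp [hr, show r < n by omega])

lemma truncV_mono (u : Vec) {m n : ℕ} (h : m ≤ n) : truncV u m ≤ truncV u n :=
  ⟨by simpa using h, fun i hi => by simp at hi ⊢; simp [hi, show i < n by omega]⟩

lemma truncM_mono (A : Mat) {m n : ℕ} (h : m ≤ n) : truncM A m ≤ truncM A n :=
  ⟨by simpa using h, fun i j hi _ => by simp at hi ⊢; simp [hi, show i < n by omega]⟩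

lemma le_iff_truncV {u v : Vec} : u ≤ v ↔ u.len ≤ v.len ∧ truncV v u.len = u := by
  constructor
  · intro h
    refine ⟨h.1, Vec.eq_of rfl fun i hi => ?_⟩
    simp at hi ⊢
    simp [hi, (h.2 i hi).symm]
  · rintro ⟨h1, h2⟩
    exact h2 ▸ truncV_le v h1

lemma le_iff_truncM {A B : Mat} : A ≤ B ↔ A.size ≤ B.size ∧ truncM B A.size = A := by
  constructor
  · intro h
    refine ⟨h.1, Mat.eq_of rfl fun r c hr hc => ?_⟩
    simp at hr ⊢
    simp [hr, (h.2 r c hr (by omega)).symm]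
  · rintro ⟨h1, h2⟩
    exact h2 ▸ truncM_le B h1

/-- The empty vector. -/
def emptyVec : Vec := ⟨0, fun _ => false, fun _ _ => rfl⟩

/-- The empty matrix. -/
def emptyMat : Mat := ⟨0, fun _ _ => false, fun _ _ _ => rfl, fun _ _ _ => rfl⟩

@[simp] lemma emptyVec_le (u : Vec) : emptyVec ≤ u := ⟨Nat.zero_le _, fun i hi => by simp [emptyVec] at hi⟩
@[simp] lemma emptyMat_le (A : Mat) : emptyMat ≤ A :=
  ⟨Nat.zero_le _, fun i j hi _ => by simp [emptyMat] at hi⟩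

lemma truncV_zero (u : Vec) : truncV u 0 = emptyVec := Vec.eq_of rfl (fun i hi => by simp at hi)
lemma truncM_zero (A : Mat) : truncM A 0 = emptyMat := Mat.eq_of rfl (fun r c hr _ => by simp at hr)

lemma vec_len_zero {u : Vec} (h : u.len = 0) : u = emptyVec :=
  Vec.eq_of h (fun i hi => by omega)
lemma mat_size_zero {A : Mat} (h : A.size = 0) : A = emptyMat :=
  Mat.eq_of h (fun r c hr _ => by omega)

lemma lt_iff_truncV {u v : Vec} : u < v ↔ u.len < v.len ∧ truncV v u.len = u := by
  constructor
  · intro h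
    exact ⟨vecLt_len h, (le_iff_truncV.mp h.le).2⟩
  · rintro ⟨h1, h2⟩
    exact lt_of_le_of_ne (le_iff_truncV.mpr ⟨h1.le, h2⟩)
      (fun he => by subst he; omega)

lemma lt_iff_truncM {A B : Mat} : A < B ↔ A.size < B.size ∧ truncM B A.size = A := by
  constructor
  · intro h
    exact ⟨matLt_size h, (le_iff_truncM.mp h.le).2⟩
  · rintro ⟨h1, h2⟩
    exact lt_of_le_of_ne (le_iff_truncM.mpr ⟨h1.le, h2⟩)
      (fun he => by subst he; omega)

lemma levelIn_univ_vec (u : Vec) : levelIn Set.univ u = u.len := by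
  have hset : predsIn (Set.univ : Set Vec) u = truncV u '' Set.Iio u.len := by
    ext s
    constructor
    · rintro ⟨-, hs⟩
      exact ⟨s.len, vecLt_len hs, (le_iff_truncV.mp hs.le).2⟩
    · rintro ⟨n, hn, rfl⟩
      exact ⟨trivial, lt_iff_truncV.mpr ⟨by simpa using hn, by simp⟩⟩
  rw [levelIn, hset, Set.ncard_image_of_injOn
    (fun a _ b _ hab => by simpa using congrArg Vec.len hab)]
  rw [← Finset.coe_range, Set.ncard_coe_finset, Finset.card_range]

lemma levelIn_univ_mat (A : Mat) : levelIn Set.univ A = A.size := by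
  have hset : predsIn (Set.univ : Set Mat) A = truncM A '' Set.Iio A.size := by
    ext s
    constructor
    · rintro ⟨-, hs⟩
      exact ⟨s.size, matLt_size hs, (le_iff_truncM.mp hs.le).2⟩
    · rintro ⟨n, hn, rfl⟩
      exact ⟨trivial, lt_iff_truncM.mpr ⟨by simpa using hn, by simp⟩⟩
  rw [levelIn, hset, Set.ncard_image_of_injOn
    (fun a _ b _ hab => by simpa using congrArg Mat.size hab)]
  rw [← Finset.coe_range, Set.ncard_coe_finset, Finset.card_range]

/-- One-step extension of a vector by a bit. -/
def vecExtend (u : Vec) (b : Bool) : Vec where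
  len := u.len + 1
  entry := fun i => if i < u.len then u.entry i else if i = u.len then b else false
  outside := fun i hi => by rw [if_neg (by omega), if_neg (by omega)]

@[simp] lemma vecExtend_len (u : Vec) (b : Bool) : (vecExtend u b).len = u.len + 1 := rfl

lemma vecExtend_entry_lt (u : Vec) (b : Bool) {i : ℕ} (h : i < u.len) :
    (vecExtend u b).entry i = u.entry i := if_pos h

lemma vecExtend_entry_last (u : Vec) (b : Bool) : (vecExtend u b).entry u.len = b := by
  show (if u.len < u.len then _ else if u.len = u.len then b else false) = b
  rw [if_neg (by omega), if_pos rfl]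

lemma le_vecExtend (u : Vec) (b : Bool) : u ≤ vecExtend u b :=
  ⟨by simp, fun i hi => (vecExtend_entry_lt u b hi).symm⟩

lemma eq_vecExtend {u t : Vec} (h : u ≤ t) (hs : t.len = u.len + 1) :
    t = vecExtend u (t.entry u.len) := by
  refine Vec.eq_of (by simp [hs]) fun i hi => ?_
  rw [hs] at hi
  show t.entry i = if i < u.len then u.entry i else if i = u.len then t.entry u.len else false
  by_cases h1 : i < u.len
  · rw [if_pos h1, h.2 i h1]
  · rw [if_neg h1, if_pos (by omega)]
    congr 1; omega

/-- Padding a vector with zeros to length (at least) `n`. -/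
def padV (u : Vec) (n : ℕ) : Vec where
  len := max n u.len
  entry := u.entry
  outside := fun i hi => u.outside i (le_trans (le_max_right _ _) hi)

/-- Padding a matrix with zero rows to size (at least) `n`. -/
def padM (A : Mat) (n : ℕ) : Mat where
  size := max n A.size
  entry := A.entry
  lower := A.lower
  outside := fun i j hi => A.outside i j (le_trans (le_max_right _ _) hi)

@[simp] lemma padV_entry (u : Vec) (n i : ℕ) : (padV u n).entry i = u.entry i := rfl
@[simp] lemma padM_entry (A : Mat) (n i j : ℕ) : (padM A n).entry i j = A.entry i j := rfl

lemma padV_len (u : Vec) {n : ℕ} (h : u.len ≤ n) : (padV u n).len = n := max_eq_left h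
lemma padM_size (A : Mat) {n : ℕ} (h : A.size ≤ n) : (padM A n).size = n := max_eq_left h

lemma le_padV (u : Vec) (n : ℕ) : u ≤ padV u n := ⟨le_max_right _ _, fun _ _ => rfl⟩
lemma le_padM (A : Mat) (n : ℕ) : A ≤ padM A n := ⟨le_max_right _ _, fun _ _ _ _ => rfl⟩

@[simp] lemma matExtend_size (A : Mat) (v : Vec) : (matExtend A v).size = A.size + 1 := rfl

lemma matExtend_entry_lt (A : Mat) (v : Vec) {i : ℕ} (j : ℕ) (h : i < A.size) :
    (matExtend A v).entry i j = A.entry i j := if_pos h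

lemma matExtend_entry_last (A : Mat) (v : Vec) {j : ℕ} (h : j < A.size) :
    (matExtend A v).entry A.size j = v.entry j := by
  show (if A.size < A.size then _ else if A.size = A.size ∧ j < A.size then v.entry j else false)
    = v.entry j
  rw [if_neg (by omega), if_pos ⟨rfl, h⟩]

lemma le_matExtend (A : Mat) (v : Vec) : A ≤ matExtend A v :=
  ⟨by simp, fun i j hi _ => (matExtend_entry_lt A v j hi).symm⟩

lemma eq_matExtend {A B : Mat} (h : A ≤ B) (hs : B.size = A.size + 1) :
    B = matExtend A (truncV (rowOf B A.size) A.size) := by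
  refine Mat.eq_of (by simp [hs]) fun r c hr hc => ?_
  rw [hs] at hr
  by_cases h1 : r < A.size
  · rw [matExtend_entry_lt A _ c h1, matLe_entry h h1]
  · have hr' : r = A.size := by omega
    subst hr'
    rw [matExtend_entry_last A _ (by omega)]
    simp [rowOf, hc, show c < A.size by omega]

lemma immSucc_univ_mat {A B : Mat} :
    IsImmSuccIn Set.univ A B ↔ A < B ∧ B.size = A.size + 1 := by
  constructor
  · rintro ⟨-, -, hlt, hmax⟩
    refine ⟨hlt, ?_⟩
    by_contra hne
    have hsz : A.size + 1 < B.size := by have := matLt_size hlt; omega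
    have h1 : A < truncM B (A.size + 1) := by
      rw [lt_iff_truncM]
      refine ⟨by simp, ?_⟩
      rw [truncM_truncM B (by omega)]
      exact (le_iff_truncM.mp hlt.le).2
    have h2 : truncM B (A.size + 1) < B :=
      lt_iff_truncM.mpr ⟨by simpa using hsz, by simp⟩
    exact hmax _ trivial h1 h2
  · rintro ⟨hlt, hs⟩
    refine ⟨trivial, trivial, hlt, fun u _ h1 h2 => ?_⟩
    have := matLt_size h1; have := matLt_size h2; omega

lemma immSucc_univ_vec {u t : Vec} :
    IsImmSuccIn Set.univ u t ↔ u < t ∧ t.len = u.len + 1 := by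
  constructor
  · rintro ⟨-, -, hlt, hmax⟩
    refine ⟨hlt, ?_⟩
    by_contra hne
    have hsz : u.len + 1 < t.len := by have := vecLt_len hlt; omega
    have h1 : u < truncV t (u.len + 1) := by
      rw [lt_iff_truncV]
      refine ⟨by simp, ?_⟩
      rw [truncV_truncV t (by omega)]
      exact (le_iff_truncV.mp hlt.le).2
    have h2 : truncV t (u.len + 1) < t :=
      lt_iff_truncV.mpr ⟨by simpa using hsz, by simp⟩
    exact hmax _ trivial h1 h2
  · rintro ⟨hlt, hs⟩
    refine ⟨trivial, trivial, hlt, fun w _ h1 h2 => ?_⟩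
    have := vecLt_len h1; have := vecLt_len h2; omega

section Levels

variable (H : HGraph ℕ) (S : Finset ℕ)

/-- The `m`-th row of `A^i` as a total boolean function. -/
noncomputable def rowF (i m : ℕ) : ℕ → Bool := fun c => (matOf H i).entry m c

lemma matOf_size (i : ℕ) : (matOf H i).size = 2 * i + 1 := rfl

lemma rowF_def (i m c : ℕ) : rowF H i m c =
    (if m % 2 = 1 ∧ c / 2 < m / 2 ∧ m / 2 < i ∧ ({c / 2, m / 2, i} : Finset ℕ) ∈ H.edges
      then true else false) := rfl

lemma rowF_paired (i m c : ℕ) : rowF H i m (2 * (c / 2)) = rowF H i m c := by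
  rw [rowF_def, rowF_def, show 2 * (c / 2) / 2 = c / 2 by omega]

lemma rowF_even (i m c : ℕ) (h : m % 2 = 0) : rowF H i m c = false := by
  rw [rowF_def, if_neg]; rintro ⟨h1, -⟩; omega

/-- The size of the meet of `A^i` and `A^{i'}`. -/
noncomputable def meetSz (i i' : ℕ) : ℕ :=
  Nat.findGreatest
    (fun n => ∀ r, r < n → ∀ c, (matOf H i).entry r c = (matOf H i').entry r c)
    (min (2 * i + 1) (2 * i' + 1))

/-- The first position where the rows `(i, m)` and `(i', m')` differ (always even). -/
noncomputable def dpos (i m i' m' : ℕ) : ℕ :=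
  if h : ∃ c, rowF H i m c ≠ rowF H i' m' c then 2 * (Nat.find h / 2) else 0

/-- The basic levels: `0`, the sizes `2i+1` and the meet sizes. -/
noncomputable def L0 : Finset ℕ :=
  insert 0 (S.image fun i => 2 * i + 1) ∪ (S ×ˢ S).image fun p => meetSz H p.1 p.2

/-- The full set of levels. -/
noncomputable def Lset : Finset ℕ :=
  L0 H S ∪ ((S ×ˢ L0 H S) ×ˢ (S ×ˢ L0 H S)).image fun p => dpos H p.1.1 p.1.2 p.2.1 p.2.2

/-- The height of the envelope. -/
noncomputable def hgt : ℕ := (Lset H S).card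

/-- The enumeration of the levels in increasing order. -/
noncomputable def lv (j : ℕ) : ℕ := ((Lset H S).sort (· ≤ ·)).getD j 0

lemma length_sortL : ((Lset H S).sort (· ≤ ·)).length = hgt H S := Finset.length_sort _

lemma lv_eq_get {j : ℕ} (hj : j < hgt H S) :
    lv H S j = ((Lset H S).sort (· ≤ ·)).get ⟨j, by rw [length_sortL]; exact hj⟩ := by
  rw [lv, List.getD_eq_getElem _ _ (by rw [length_sortL]; exact hj)]
  rfl

lemma lv_mem {j : ℕ} (hj : j < hgt H S) : lv H S j ∈ Lset H S := by
  rw [← Finset.mem_sort (α := ℕ) (· ≤ ·), lv_eq_get H S hj]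
  exact List.get_mem _ _

lemma mem_lv {x : ℕ} (hx : x ∈ Lset H S) : ∃ j, j < hgt H S ∧ lv H S j = x := by
  rw [← Finset.mem_sort (α := ℕ) (· ≤ ·), List.mem_iff_get] at hx
  obtain ⟨n, hn⟩ := hx
  refine ⟨n, by rw [← length_sortL H S]; exact n.isLt, ?_⟩
  rw [lv_eq_get H S (by rw [← length_sortL H S]; exact n.isLt)]
  simpa using hn

lemma lv_strictMono {j j' : ℕ} (h : j < j') (hj' : j' < hgt H S) :
    lv H S j < lv H S j' := by
  rw [lv_eq_get H S (h.trans hj'), lv_eq_get H S hj']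
  exact (Finset.sortedLT_sort _).pairwise.rel_get_of_lt (by simpa using h)

lemma lv_lt_lv_iff {j j' : ℕ} (hj : j < hgt H S) (hj' : j' < hgt H S) :
    lv H S j < lv H S j' ↔ j < j' := by
  constructor
  · intro h
    by_contra hc
    rcases lt_or_eq_of_le (le_of_not_gt hc) with h' | h'
    · exact absurd (lv_strictMono H S h' hj) (by omega)
    · rw [h'] at h; exact absurd h (lt_irrefl _)
  · exact fun h => lv_strictMono H S h hj'

lemma zero_mem_Lset : 0 ∈ Lset H S := by
  apply Finset.mem_union_left
  apply Finset.mem_union_left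
  exact Finset.mem_insert_self _ _

lemma hgt_pos : 0 < hgt H S :=
  Finset.card_pos.mpr ⟨0, zero_mem_Lset H S⟩

lemma lv_zero : lv H S 0 = 0 := by
  obtain ⟨j, hj, hlv⟩ := mem_lv H S (zero_mem_Lset H S)
  rcases Nat.eq_zero_or_pos j with rfl | hpos
  · exact hlv
  · have := lv_strictMono H S hpos hj
    omega

lemma lv_succ_le {x j : ℕ} (hx : x ∈ Lset H S) (hj : j + 1 < hgt H S)
    (hlt : x < lv H S (j + 1)) : x ≤ lv H S j := by
  obtain ⟨t, ht, rfl⟩ := mem_lv H S hx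
  have : t < j + 1 := (lv_lt_lv_iff H S ht hj).mp hlt
  rcases lt_or_eq_of_le (Nat.lt_succ_iff.mp this) with h | h
  · exact (lv_strictMono H S h (by omega)).le
  · exact h ▸ le_rfl

lemma twoI_mem_Lset {i : ℕ} (hi : i ∈ S) : 2 * i + 1 ∈ Lset H S := by
  apply Finset.mem_union_left
  apply Finset.mem_union_left
  exact Finset.mem_insert_of_mem (Finset.mem_image_of_mem _ hi)

lemma meetSz_mem_L0 {i i' : ℕ} (hi : i ∈ S) (hi' : i' ∈ S) : meetSz H i i' ∈ L0 H S := by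
  apply Finset.mem_union_right
  exact Finset.mem_image.mpr ⟨(i, i'), Finset.mem_product.mpr ⟨hi, hi'⟩, rfl⟩

lemma L0_subset_Lset : L0 H S ⊆ Lset H S := Finset.subset_union_left

lemma dpos_mem_Lset {i m i' m' : ℕ} (hi : i ∈ S) (hm : m ∈ L0 H S) (hi' : i' ∈ S)
    (hm' : m' ∈ L0 H S) : dpos H i m i' m' ∈ Lset H S := by
  apply Finset.mem_union_right
  exact Finset.mem_image.mpr ⟨((i, m), (i', m')),
    Finset.mem_product.mpr ⟨Finset.mem_product.mpr ⟨hi, hm⟩, Finset.mem_product.mpr ⟨hi', hm'⟩⟩,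
    rfl⟩

lemma rowF_not_L0 {i m : ℕ} (hm : m ∈ Lset H S) (hm0 : m ∉ L0 H S) (c : ℕ) :
    rowF H i m c = false := by
  apply rowF_even
  rcases Finset.mem_union.mp hm with h | h
  · exact absurd h hm0
  · obtain ⟨p, -, hp⟩ := Finset.mem_image.mp h
    rw [← hp, dpos]
    split <;> omega

lemma dpos_spec {i m i' m' : ℕ} (hne : ∃ c, rowF H i m c ≠ rowF H i' m' c) :
    (rowF H i m (dpos H i m i' m') ≠ rowF H i' m' (dpos H i m i' m')) ∧
    (∀ c, c < dpos H i m i' m' → rowF H i m c = rowF H i' m' c) ∧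
    (∀ c, rowF H i m c ≠ rowF H i' m' c → dpos H i m i' m' ≤ c) := by
  set c₀ := Nat.find hne with hc₀
  have hspec : rowF H i m c₀ ≠ rowF H i' m' c₀ := Nat.find_spec hne
  have hmin : ∀ c, c < c₀ → rowF H i m c = rowF H i' m' c := by
    intro c hc
    by_contra hcon
    exact absurd (Nat.find_min' hne hcon) (by omega)
  have heven : 2 * (c₀ / 2) = c₀ := by
    by_contra hodd
    have h1 : c₀ % 2 = 1 := by omega
    have h2 : 2 * (c₀ / 2) < c₀ := by omega
    have := hmin _ h2
    rw [rowF_paired, rowF_paired] at this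
    exact hspec this
  have hd : dpos H i m i' m' = c₀ := by rw [dpos, dif_pos hne, ← hc₀, heven]
  rw [hd]
  exact ⟨hspec, hmin, fun c hc => Nat.find_min' hne hc⟩

/-- The key closure property: rows indexed by levels that agree up to `lv j`
agree up to `lv (j+1)`. -/
lemma rows_agree_extend {j i m i' m' : ℕ} (hj : j + 1 < hgt H S) (hi : i ∈ S) (hi' : i' ∈ S)
    (hm : m ∈ Lset H S) (hm' : m' ∈ Lset H S)
    (hag : ∀ c, c ≤ lv H S j → rowF H i m c = rowF H i' m' c) :
    ∀ c, c < lv H S (j + 1) → rowF H i m c = rowF H i' m' c := by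
  obtain ⟨ma, hma, hrowa⟩ : ∃ ma ∈ L0 H S, ∀ c, rowF H i m c = rowF H i ma c := by
    by_cases h : m ∈ L0 H S
    · exact ⟨m, h, fun _ => rfl⟩
    · refine ⟨0, Finset.mem_union_left _ (Finset.mem_insert_self _ _), fun c => ?_⟩
      rw [rowF_not_L0 H S hm h, rowF_even H i 0 c (by omega)]
  obtain ⟨ma', hma', hrowa'⟩ : ∃ mb ∈ L0 H S, ∀ c, rowF H i' m' c = rowF H i' mb c := by
    by_cases h : m' ∈ L0 H S
    · exact ⟨m', h, fun _ => rfl⟩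
    · refine ⟨0, Finset.mem_union_left _ (Finset.mem_insert_self _ _), fun c => ?_⟩
      rw [rowF_not_L0 H S hm' h, rowF_even H i' 0 c (by omega)]
  intro c hc
  by_contra hcon
  have hne : ∃ c, rowF H i ma c ≠ rowF H i' ma' c :=
    ⟨c, by rw [← hrowa, ← hrowa']; exact hcon⟩
  obtain ⟨hd1, hd2, hd3⟩ := dpos_spec H hne
  set d := dpos H i ma i' ma' with hddef
  have hdle : d ≤ c := hd3 c (by rw [← hrowa, ← hrowa']; exact hcon)
  have hdmem : d ∈ Lset H S := dpos_mem_Lset H S hi hma hi' hma'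
  have hdlt : d < lv H S (j + 1) := lt_of_le_of_lt hdle hc
  have hdlej : d ≤ lv H S j := lv_succ_le H S hdmem hj hdlt
  have := hag d hdlej
  rw [hrowa, hrowa'] at this
  exact hd1 this

lemma meetSz_agree {i i' : ℕ} :
    ∀ r, r < meetSz H i i' → ∀ c, (matOf H i).entry r c = (matOf H i').entry r c := by
  unfold meetSz
  exact Nat.findGreatest_spec
    (P := fun n => ∀ r, r < n → ∀ c, (matOf H i).entry r c = (matOf H i').entry r c)
    (m := 0) (Nat.zero_le _) (fun r hr => absurd hr (Nat.not_lt_zero r))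

lemma le_meetSz {i i' n : ℕ} (hn : n ≤ min (2 * i + 1) (2 * i' + 1))
    (hag : ∀ r, r < n → ∀ c, (matOf H i).entry r c = (matOf H i').entry r c) :
    n ≤ meetSz H i i' := by
  unfold meetSz
  exact Nat.le_findGreatest hn hag

/-- The key closure property for matrices: truncations that agree at level `j`,
together with the row `lv j`, agree at level `j+1`. -/
lemma trunc_next_eq {j i i' : ℕ} (hj : j + 1 < hgt H S) (hi : i ∈ S) (hi' : i' ∈ S)
    (hsz : lv H S (j + 1) ≤ 2 * i + 1) (hsz' : lv H S (j + 1) ≤ 2 * i' + 1)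
    (htr : truncM (matOf H i) (lv H S j) = truncM (matOf H i') (lv H S j))
    (hrw : ∀ c, c < lv H S j → rowF H i (lv H S j) c = rowF H i' (lv H S j) c) :
    truncM (matOf H i) (lv H S (j + 1)) = truncM (matOf H i') (lv H S (j + 1)) := by
  have hjlt : lv H S j < lv H S (j + 1) := lv_strictMono H S (by omega) hj
  have hag : ∀ r, r < lv H S j + 1 → ∀ c, (matOf H i).entry r c = (matOf H i').entry r c := by
    intro r hr c
    rcases lt_or_eq_of_le (Nat.lt_succ_iff.mp hr) with h | h
    · have := congrArg (fun M => Mat.entry M r c) htr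
      simpa [h] using this
    · subst h
      by_cases hcr : c < lv H S j
      · exact hrw c hcr
      · rw [(matOf H i).lower _ _ (le_of_not_gt hcr), (matOf H i').lower _ _ (le_of_not_gt hcr)]
  have hle : lv H S j + 1 ≤ meetSz H i i' :=
    le_meetSz H (by omega) hag
  have hmem : meetSz H i i' ∈ Lset H S := L0_subset_Lset H S (meetSz_mem_L0 H S hi hi')
  have hge : lv H S (j + 1) ≤ meetSz H i i' := by
    by_contra hlt
    have := lv_succ_le H S hmem hj (lt_of_not_ge hlt)
    omega
  refine Mat.eq_of rfl fun r c hr hc => ?_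
  simp only [truncM_entry]
  simp only [truncM_size] at hr
  rw [if_pos hr, if_pos hr]
  exact meetSz_agree H r (by omega) c

lemma lv_mono_le {j j' : ℕ} (h : j ≤ j') (hj' : j' < hgt H S) : lv H S j ≤ lv H S j' := by
  rcases lt_or_eq_of_le h with h' | h'
  · exact (lv_strictMono H S h' hj').le
  · rw [h']

lemma card_L0_le {k : ℕ} (hS : S.card = k) : (L0 H S).card ≤ 1 + k + k * k := by
  refine le_trans (Finset.card_union_le _ _) ?_
  have h1 : (insert 0 (S.image fun i => 2 * i + 1)).card ≤ 1 + k := by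
    refine le_trans (Finset.card_insert_le _ _) ?_
    have := Finset.card_image_le (s := S) (f := fun i => 2 * i + 1)
    omega
  have h2 : ((S ×ˢ S).image fun p => meetSz H p.1 p.2).card ≤ k * k := by
    refine le_trans (Finset.card_image_le) ?_
    rw [Finset.card_product, hS]
  omega

lemma hgt_le {k : ℕ} (hS : S.card = k) :
    hgt H S ≤ (1 + k + k * k) + (k * (1 + k + k * k)) * (k * (1 + k + k * k)) := by
  have h0 := card_L0_le H S hS
  have h1 : (((S ×ˢ L0 H S) ×ˢ (S ×ˢ L0 H S)).image
      fun p => dpos H p.1.1 p.1.2 p.2.1 p.2.2).card ≤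
      (k * (1 + k + k * k)) * (k * (1 + k + k * k)) := by
    refine le_trans Finset.card_image_le ?_
    simp only [Finset.card_product, hS]
    exact Nat.mul_le_mul (Nat.mul_le_mul (le_refl k) h0) (Nat.mul_le_mul (le_refl k) h0)
  refine le_trans (Finset.card_union_le _ _) ?_
  omega

/-- The row `n` of `A`, truncated to a vector of length `n`. -/
def vrowA (A : Mat) (n : ℕ) : Vec where
  len := n
  entry := fun c => if c < n then A.entry n c else false
  outside := fun c hc => if_neg (by omega)

@[simp] lemma vrowA_len (A : Mat) (n : ℕ) : (vrowA A n).len = n := rfl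
@[simp] lemma vrowA_entry (A : Mat) (n c : ℕ) :
    (vrowA A n).entry c = if c < n then A.entry n c else false := rfl

lemma matExtend_truncM (A : Mat) (n : ℕ) :
    matExtend (truncM A n) (vrowA A n) = truncM A (n + 1) := by
  refine Mat.eq_of (by simp) fun r c hr hc => ?_
  simp only [matExtend_size, truncM_size] at hr
  by_cases h1 : r < n
  · rw [matExtend_entry_lt _ _ c (by simpa using h1)]
    simp [h1, show r < n + 1 by omega]
  · have hr' : r = n := by omega
    have hcn : c < n := by omega
    have h2 : (matExtend (truncM A n) (vrowA A n)).entry n c = (vrowA A n).entry c :=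
      matExtend_entry_last (truncM A n) (vrowA A n) (by simpa using hcn)
    rw [hr', h2]
    simp [hcn, show n < n + 1 by omega]

/-- The canonical successor choice function for the strong subtree `S₂`. -/
noncomputable def Ee (j : ℕ) (C : Mat) (v : Vec) : Mat :=
  if h : ∃ i, i ∈ S ∧ C = truncM (matOf H i) (lv H S j) ∧ v = vrowA (matOf H i) (lv H S j) ∧
      lv H S (j + 1) ≤ 2 * i + 1
  then truncM (matOf H h.choose) (lv H S (j + 1))
  else padM (matExtend C v) (lv H S (j + 1))

/-- The levels of the strong subtree `S₂`. -/
noncomputable def Lev2 : ℕ → Set Mat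
  | 0 => {emptyMat}
  | j + 1 => {B | ∃ C ∈ Lev2 j, ∃ v : Vec, v.len = lv H S j ∧ B = Ee H S j C v}

/-- The strong subtree `S₂`. -/
noncomputable def SS2 : Set Mat := ⋃ j ∈ Set.Iio (hgt H S), Lev2 H S j

lemma mem_SS2 {B : Mat} : B ∈ SS2 H S ↔ ∃ j, j < hgt H S ∧ B ∈ Lev2 H S j := by
  simp [SS2]

lemma Ee_correct {j i : ℕ} (hj : j + 1 < hgt H S) (hi : i ∈ S)
    (hsz : lv H S (j + 1) ≤ 2 * i + 1) :
    Ee H S j (truncM (matOf H i) (lv H S j)) (vrowA (matOf H i) (lv H S j)) =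
      truncM (matOf H i) (lv H S (j + 1)) := by
  have hex : ∃ i', i' ∈ S ∧
      truncM (matOf H i) (lv H S j) = truncM (matOf H i') (lv H S j) ∧
      vrowA (matOf H i) (lv H S j) = vrowA (matOf H i') (lv H S j) ∧
      lv H S (j + 1) ≤ 2 * i' + 1 := ⟨i, hi, rfl, rfl, hsz⟩
  rw [Ee, dif_pos hex]
  obtain ⟨hi', htr, hvr, hsz'⟩ := hex.choose_spec
  refine trunc_next_eq H S hj hi' hi hsz' hsz htr.symm fun c hc => ?_
  have := congrArg (fun w => Vec.entry w c) hvr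
  simpa [rowF, vrowA, hc] using this.symm

lemma Ee_size {j : ℕ} {C : Mat} {v : Vec} (hj : j + 1 < hgt H S) (hC : C.size = lv H S j) :
    (Ee H S j C v).size = lv H S (j + 1) := by
  rw [Ee]
  split
  · simp
  · refine padM_size _ ?_
    have := lv_strictMono H S (show j < j + 1 by omega) hj
    simp [hC]
    omega

lemma Ee_trunc {j : ℕ} {C : Mat} {v : Vec} (hj : j + 1 < hgt H S) (hC : C.size = lv H S j) :
    truncM (Ee H S j C v) (lv H S j) = C := by
  have hjj : lv H S j ≤ lv H S (j + 1) := (lv_strictMono H S (show j < j + 1 by omega) hj).le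
  rw [Ee]
  split
  · next h =>
    obtain ⟨hi', htr, hvr, hsz'⟩ := h.choose_spec
    rw [truncM_truncM _ hjj, ← htr]
  · refine Mat.eq_of (by simp [hC]) fun r c hr hc => ?_
    simp only [truncM_size] at hr
    simp only [truncM_entry, if_pos hr, padM_entry]
    rw [matExtend_entry_lt _ _ c (by omega)]

lemma Ee_ge {j : ℕ} {C : Mat} {v : Vec} (hj : j + 1 < hgt H S) (hC : C.size = lv H S j)
    (hv : v.len = lv H S j) : matExtend C v ≤ Ee H S j C v := by
  have hjj : lv H S j < lv H S (j + 1) := lv_strictMono H S (show j < j + 1 by omega) hj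
  rw [Ee]
  split
  · next h =>
    obtain ⟨hi', htr, hvr, hsz'⟩ := h.choose_spec
    have : matExtend C v = truncM (matOf H h.choose) (lv H S j + 1) := by
      rw [← matExtend_truncM (matOf H h.choose) (lv H S j), ← htr, ← hvr]
    rw [this]
    exact truncM_mono _ (by omega)
  · exact le_padM _ _

lemma Ee_row {j : ℕ} {C : Mat} {v : Vec} (hj : j + 1 < hgt H S) (hC : C.size = lv H S j)
    (hv : v.len = lv H S j) {c : ℕ} (hc : c < lv H S j) :
    (Ee H S j C v).entry (lv H S j) c = v.entry c := by
  have h := matLe_entry (Ee_ge H S hj hC hv) (r := C.size) (c := c) (by simp)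
  rw [hC] at h
  rw [← h, ← hC, matExtend_entry_last _ _ (by omega)]

lemma L2_size : ∀ {j : ℕ} {B : Mat}, B ∈ Lev2 H S j → j < hgt H S → B.size = lv H S j := by
  intro j
  induction j with
  | zero =>
    intro B hB hj
    rw [show B = emptyMat from hB, lv_zero]
    rfl
  | succ j ih =>
    intro B hB hj
    obtain ⟨C, hC, v, hv, rfl⟩ := hB
    exact Ee_size H S hj (ih hC (by omega))

lemma L2_trunc : ∀ {j : ℕ}, j < hgt H S → ∀ {B : Mat}, B ∈ Lev2 H S j → ∀ {t : ℕ}, t ≤ j →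
    truncM B (lv H S t) ∈ Lev2 H S t := by
  intro j
  induction j with
  | zero =>
    intro hj B hB t ht
    have ht0 : t = 0 := by omega
    subst ht0
    rw [show B = emptyMat from hB, lv_zero, truncM_zero]
    rfl
  | succ j ih =>
    intro hj B hB t ht
    rcases Nat.eq_or_lt_of_le ht with rfl | h
    · rw [← L2_size H S hB hj, truncM_self]
      exact hB
    · obtain ⟨C, hC, v, hv, rfl⟩ := hB
      have hjlt : j < hgt H S := by omega
      have hCs : C.size = lv H S j := L2_size H S hC hjlt
      have htr : truncM (Ee H S j C v) (lv H S t) = truncM C (lv H S t) := by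
        rw [← truncM_truncM (Ee H S j C v) (lv_mono_le H S (show t ≤ j by omega) hjlt),
          Ee_trunc H S hj hCs]
      rw [htr]
      exact ih hjlt hC (by omega)

lemma L2_nonempty {j : ℕ} (hj : j < hgt H S) : (Lev2 H S j).Nonempty := by
  induction j with
  | zero => exact ⟨emptyMat, rfl⟩
  | succ j ih =>
    obtain ⟨C, hC⟩ := ih (by omega)
    exact ⟨Ee H S j C (padV emptyVec (lv H S j)), C, hC, _,
      by simp [padV, emptyVec], rfl⟩

lemma L2_le_iff {j j' : ℕ} {B B' : Mat} (hB : B ∈ Lev2 H S j) (hB' : B' ∈ Lev2 H S j')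
    (hj : j < hgt H S) (hj' : j' < hgt H S) :
    B ≤ B' ↔ j ≤ j' ∧ B = truncM B' (lv H S j) := by
  constructor
  · intro h
    have h1 := le_iff_truncM.mp h
    have hsz : lv H S j ≤ lv H S j' := by
      rw [← L2_size H S hB hj, ← L2_size H S hB' hj']; exact h1.1
    refine ⟨?_, by rw [← L2_size H S hB hj]; exact h1.2.symm⟩
    by_contra hc
    have := lv_strictMono H S (show j' < j by omega) hj
    omega
  · rintro ⟨h1, rfl⟩
    refine truncM_le _ ?_
    rw [L2_size H S hB' hj']
    exact lv_mono_le H S h1 hj'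

lemma L2_level_eq {j j' : ℕ} {B : Mat} (hB : B ∈ Lev2 H S j) (hB' : B ∈ Lev2 H S j')
    (hj : j < hgt H S) (hj' : j' < hgt H S) : j = j' := by
  have h1 := L2_size H S hB hj
  have h2 := L2_size H S hB' hj'
  by_contra hc
  rcases Nat.lt_or_ge j j' with h | h
  · have := lv_strictMono H S h hj'; omega
  · have := lv_strictMono H S (show j' < j by omega) hj; omega

lemma emptyMat_mem_SS2 : emptyMat ∈ SS2 H S :=
  mem_SS2 H S |>.mpr ⟨0, hgt_pos H S, rfl⟩

lemma L2_row_diff {t : ℕ} {B B' : Mat} (ht : t + 1 < hgt H S)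
    (hB : B ∈ Lev2 H S (t + 1)) (hB' : B' ∈ Lev2 H S (t + 1))
    (htr : truncM B (lv H S t) = truncM B' (lv H S t)) (hne : B ≠ B') :
    ∃ p, p < lv H S t ∧ B.entry (lv H S t) p ≠ B'.entry (lv H S t) p := by
  obtain ⟨C, hC, v, hv, rfl⟩ := hB
  obtain ⟨C', hC', v', hv', rfl⟩ := hB'
  have htlt : t < hgt H S := by omega
  have hCs := L2_size H S hC htlt
  have hCs' := L2_size H S hC' htlt
  have hCC : C = C' := by
    rw [← Ee_trunc H S ht hCs (v := v), ← Ee_trunc H S ht hCs' (v := v'), htr]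
  subst hCC
  have hvv : v ≠ v' := fun h => hne (by rw [h])
  obtain ⟨p, hp, hpe⟩ : ∃ p, p < lv H S t ∧ v.entry p ≠ v'.entry p := by
    by_contra hcon
    push_neg at hcon
    exact hvv (Vec.eq_of (by rw [hv, hv']) fun i hi => hcon i (by rw [← hv]; exact hi))
  exact ⟨p, hp, by rw [Ee_row H S ht hCs hv hp, Ee_row H S ht hCs hv' hp]; exact hpe⟩

lemma SS2_meet {j j' : ℕ} {B B' : Mat} (hj : j < hgt H S) (hj' : j' < hgt H S)
    (hB : B ∈ Lev2 H S j) (hB' : B' ∈ Lev2 H S j') :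
    ∃ m ∈ SS2 H S, IsMeetIn Set.univ B B' m := by
  set P : ℕ → Prop := fun t => t ≤ min j j' ∧ truncM B (lv H S t) = truncM B' (lv H S t)
    with hPdef
  have hP0 : P 0 := ⟨Nat.zero_le _, by rw [lv_zero, truncM_zero, truncM_zero]⟩
  set c := Nat.findGreatest P (min j j') with hcdef
  have hPc : P c := Nat.findGreatest_spec (Nat.zero_le _) hP0
  have hmax : ∀ t, t ≤ min j j' → P t → t ≤ c := fun t ht hPt => Nat.le_findGreatest ht hPt
  obtain ⟨hcle, hctr⟩ := hPc
  have hclt : c < hgt H S := by omega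
  refine ⟨truncM B (lv H S c),
    mem_SS2 H S |>.mpr ⟨c, hclt, L2_trunc H S hj hB (by omega)⟩, trivial, ?_, ?_, ?_⟩
  · exact truncM_le _ (by rw [L2_size H S hB hj]; exact lv_mono_le H S (by omega) hj)
  · rw [hctr]
    exact truncM_le _ (by rw [L2_size H S hB' hj']; exact lv_mono_le H S (by omega) hj')
  · intro D _ hDB hDB'
    have hDsz : D.size ≤ lv H S c := by
      by_contra hcon
      push_neg at hcon
      have hcmin : c < min j j' := by
        rcases Nat.lt_or_ge c (min j j') with h | h
        · exact h
        · exfalso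
          have hceq : c = min j j' := by omega
          have h1 : D.size ≤ B.size := hDB.1
          have h2 : D.size ≤ B'.size := hDB'.1
          rw [L2_size H S hB hj] at h1
          rw [L2_size H S hB' hj'] at h2
          rcases Nat.le_total j j' with hjj | hjj
          · have : lv H S c = lv H S j := by rw [hceq, Nat.min_eq_left hjj]
            omega
          · have : lv H S c = lv H S j' := by rw [hceq, Nat.min_eq_right hjj]
            omega
      have hnP : ¬ P (c + 1) := fun h => by have := hmax (c + 1) (by omega) h; omega
      have hdiff : truncM B (lv H S (c + 1)) ≠ truncM B' (lv H S (c + 1)) := by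
        intro h; exact hnP ⟨by omega, h⟩
      have hc1 : c + 1 < hgt H S := by omega
      have hm1 : truncM B (lv H S (c + 1)) ∈ Lev2 H S (c + 1) :=
        L2_trunc H S hj hB (by omega)
      have hm2 : truncM B' (lv H S (c + 1)) ∈ Lev2 H S (c + 1) :=
        L2_trunc H S hj' hB' (by omega)
      have htr2 : truncM (truncM B (lv H S (c + 1))) (lv H S c) =
          truncM (truncM B' (lv H S (c + 1))) (lv H S c) := by
        rw [truncM_truncM _ (lv_mono_le H S (by omega) hc1),
          truncM_truncM _ (lv_mono_le H S (by omega) hc1), hctr]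
      obtain ⟨p, hp, hpe⟩ := L2_row_diff H S hc1 hm1 hm2 htr2 hdiff
      have hlt1 : lv H S c < lv H S (c + 1) := lv_strictMono H S (by omega) hc1
      have e1 : (truncM B (lv H S (c + 1))).entry (lv H S c) p = B.entry (lv H S c) p := by
        simp [hlt1]
      have e2 : (truncM B' (lv H S (c + 1))).entry (lv H S c) p = B'.entry (lv H S c) p := by
        simp [hlt1]
      rw [e1, e2] at hpe
      have d1 := matLe_entry hDB (r := lv H S c) (c := p) (by omega)
      have d2 := matLe_entry hDB' (r := lv H S c) (c := p) (by omega)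
      rw [← d1, ← d2] at hpe
      exact hpe rfl
    rw [le_iff_truncM]
    refine ⟨by simpa using hDsz, ?_⟩
    rw [truncM_truncM _ hDsz]
    exact (le_iff_truncM.mp hDB).2

lemma Ee_mem_Lev2 {j : ℕ} {s : Mat} {v : Vec} (hs : s ∈ Lev2 H S j) (hv : v.len = lv H S j) :
    Ee H S j s v ∈ Lev2 H S (j + 1) := ⟨s, hs, v, hv, rfl⟩

lemma lt_Ee {j : ℕ} {s : Mat} {v : Vec} (hj : j + 1 < hgt H S) (hs : s ∈ Lev2 H S j) :
    s < Ee H S j s v := by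
  have hss := L2_size H S hs (by omega)
  rw [lt_iff_truncM]
  constructor
  · rw [hss, Ee_size H S hj hss]
    exact lv_strictMono H S (by omega) hj
  · rw [hss, Ee_trunc H S hj hss]

lemma SS2_immSucc {j : ℕ} {s : Mat} {v : Vec} (hj : j + 1 < hgt H S) (hs : s ∈ Lev2 H S j)
    (hv : v.len = lv H S j) : IsImmSuccIn (SS2 H S) s (Ee H S j s v) := by
  refine ⟨mem_SS2 H S |>.mpr ⟨j, by omega, hs⟩,
    mem_SS2 H S |>.mpr ⟨j + 1, hj, Ee_mem_Lev2 H S hs hv⟩, lt_Ee H S hj hs, ?_⟩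
  intro u hu h1 h2
  obtain ⟨t, ht, hut⟩ := mem_SS2 H S |>.mp hu
  have e1 := matLt_size h1
  have e2 := matLt_size h2
  rw [L2_size H S hs (by omega), L2_size H S hut ht] at e1
  rw [L2_size H S hut ht, Ee_size H S hj (L2_size H S hs (by omega))] at e2
  have := (lv_lt_lv_iff H S (by omega) ht).mp e1
  have := (lv_lt_lv_iff H S ht hj).mp e2
  omega

lemma SS2_immSucc_char {j : ℕ} {s c : Mat} (hj : j + 1 < hgt H S) (hs : s ∈ Lev2 H S j)
    (hc : IsImmSuccIn (SS2 H S) s c) : ∃ v, v.len = lv H S j ∧ c = Ee H S j s v := by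
  obtain ⟨-, hcS, hlt, hbet⟩ := hc
  obtain ⟨t, ht, hct⟩ := mem_SS2 H S |>.mp hcS
  have hjlt : j < hgt H S := by omega
  have hst : j < t := by
    have := matLt_size hlt
    rw [L2_size H S hs hjlt, L2_size H S hct ht] at this
    exact (lv_lt_lv_iff H S hjlt ht).mp this
  have hteq : t = j + 1 := by
    by_contra hne
    have h2 : j + 1 < t := by omega
    have hm : truncM c (lv H S (j + 1)) ∈ Lev2 H S (j + 1) := L2_trunc H S ht hct (by omega)
    have hlv1 : lv H S j < lv H S (j + 1) := lv_strictMono H S (by omega) hj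
    have h3 : s < truncM c (lv H S (j + 1)) := by
      rw [lt_iff_truncM]
      have hss := L2_size H S hs hjlt
      constructor
      · rw [hss]; simpa using hlv1
      · rw [hss, truncM_truncM _ hlv1.le]
        have := (le_iff_truncM.mp hlt.le).2
        rwa [hss] at this
    have h4 : truncM c (lv H S (j + 1)) < c := by
      rw [lt_iff_truncM]
      constructor
      · rw [L2_size H S hct ht]; simpa using lv_strictMono H S h2 ht
      · simp
    exact hbet _ (mem_SS2 H S |>.mpr ⟨j + 1, hj, hm⟩) h3 h4
  subst hteq
  obtain ⟨C, hC, v, hv, rfl⟩ := hct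
  have hCs := L2_size H S hC hjlt
  have hCeq : C = s := by
    have h5 : truncM (Ee H S j C v) (lv H S j) = C := Ee_trunc H S hj hCs
    have h6 : truncM (Ee H S j C v) (lv H S j) = s := by
      have := (le_iff_truncM.mp hlt.le).2
      rwa [L2_size H S hs hjlt] at this
    rw [← h5, h6]
  exact ⟨v, hv, by rw [hCeq]⟩

lemma SS2_succ_unique {j : ℕ} {s : Mat} {v : Vec} (hj : j + 1 < hgt H S)
    (hs : s ∈ Lev2 H S j) (hv : v.len = lv H S j) :
    ∀ c, IsImmSuccIn (SS2 H S) s c → matExtend s v ≤ c → c = Ee H S j s v := by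
  intro c hic hle
  obtain ⟨v', hv', rfl⟩ := SS2_immSucc_char H S hj hs hic
  have hss : s.size = lv H S j := L2_size H S hs (by omega)
  have hveq : v' = v := by
    refine Vec.eq_of (by rw [hv', hv]) fun p hp => ?_
    have hp' : p < lv H S j := by rwa [hv'] at hp
    have e1 : (Ee H S j s v').entry (lv H S j) p = v'.entry p := Ee_row H S hj hss hv' hp'
    have e2 : (matExtend s v).entry s.size p = v.entry p :=
      matExtend_entry_last _ _ (by omega)
    have e3 := matLe_entry hle (r := s.size) (c := p) (by simp)
    rw [hss] at e2 e3
    rw [← e1, ← e3, e2]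
  rw [hveq]

lemma L2_levelIn {j : ℕ} {B : Mat} (hj : j < hgt H S) (hB : B ∈ Lev2 H S j) :
    levelIn (SS2 H S) B = j := by
  have hset : predsIn (SS2 H S) B = (fun t => truncM B (lv H S t)) '' Set.Iio j := by
    ext C
    constructor
    · rintro ⟨hCS, hCB⟩
      obtain ⟨t, ht, hCt⟩ := mem_SS2 H S |>.mp hCS
      have hts : C.size = lv H S t := L2_size H S hCt ht
      have h1 : t < j := by
        have := matLt_size hCB
        rw [hts, L2_size H S hB hj] at this
        exact (lv_lt_lv_iff H S ht hj).mp this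
      refine ⟨t, h1, ?_⟩
      have := (le_iff_truncM.mp hCB.le).2
      rw [hts] at this
      exact this
    · rintro ⟨t, ht, rfl⟩
      simp only [Set.mem_Iio] at ht
      refine ⟨mem_SS2 H S |>.mpr ⟨t, by omega, L2_trunc H S hj hB (by omega)⟩, ?_⟩
      rw [lt_iff_truncM]
      refine ⟨?_, by simp⟩
      rw [L2_size H S hB hj]
      simpa using lv_strictMono H S ht hj
  rw [levelIn, hset, Set.ncard_image_of_injOn, ← Finset.coe_range, Set.ncard_coe_finset,
    Finset.card_range]
  intro a ha b hb hab
  simp only [Set.mem_Iio] at ha hb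
  have h := congrArg Mat.size hab
  simp only [truncM_size] at h
  by_contra hne
  rcases Nat.lt_or_ge a b with h' | h'
  · have := lv_strictMono H S h' (by omega); omega
  · have := lv_strictMono H S (show b < a by omega) (by omega); omega

/-- The required vectors at level `j`: truncations of relevant rows. -/
def Wv (j : ℕ) : Set Vec :=
  {w | ∃ i ∈ S, ∃ m ∈ Lset H S, lv H S j ≤ m ∧ m < 2 * i + 1 ∧
    w = truncV (vrowA (matOf H i) m) (lv H S j)}

lemma Wv_len {j : ℕ} {w : Vec} (hw : w ∈ Wv H S j) : w.len = lv H S j := by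
  obtain ⟨i, hi, m, hm, h1, h2, rfl⟩ := hw
  rfl

lemma Wv_entry {j i m : ℕ} (hm : lv H S j ≤ m) {c : ℕ} (hc : c < lv H S j) :
    (truncV (vrowA (matOf H i) m) (lv H S j)).entry c = rowF H i m c := by
  simp [truncV, vrowA, hc, lt_of_lt_of_le hc hm, rowF]

lemma Wv_unique {j : ℕ} (hj : j + 1 < hgt H S) {w w' : Vec} (hw : w ∈ Wv H S (j + 1))
    (hw' : w' ∈ Wv H S (j + 1)) (ht : truncV w (lv H S j) = truncV w' (lv H S j))
    (hb : w.entry (lv H S j) = w'.entry (lv H S j)) : w = w' := by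
  have hlv : lv H S j < lv H S (j + 1) := lv_strictMono H S (by omega) hj
  obtain ⟨i, hi, m, hm, h1, h2, rfl⟩ := hw
  obtain ⟨i', hi', m', hm', h1', h2', rfl⟩ := hw'
  have hag : ∀ c, c ≤ lv H S j → rowF H i m c = rowF H i' m' c := by
    intro c hc
    rcases lt_or_eq_of_le hc with h | h
    · have := congrArg (fun z => Vec.entry z c) ht
      simp only [truncV_entry, if_pos h] at this
      rw [← Wv_entry H S h1 (lt_trans h hlv), ← Wv_entry H S h1' (lt_trans h hlv)]
      exact this
    · subst h
      rw [← Wv_entry H S h1 hlv, ← Wv_entry H S h1' hlv]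
      exact hb
  have hext := rows_agree_extend H S hj hi hi' hm hm' hag
  refine Vec.eq_of rfl fun p hp => ?_
  simp only [truncV_len] at hp
  rw [Wv_entry H S h1 hp, Wv_entry H S h1' hp]
  exact hext p hp

/-- The canonical successor choice function for the strong subtree `S₁`. -/
noncomputable def Fe (j : ℕ) (u : Vec) (b : Bool) : Vec :=
  if h : ∃ w, w ∈ Wv H S (j + 1) ∧ truncV w (lv H S j) = u ∧ w.entry (lv H S j) = b
  then h.choose
  else padV (vecExtend u b) (lv H S (j + 1))

/-- The levels of the strong subtree `S₁`. -/
noncomputable def Lev1 : ℕ → Set Vec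
  | 0 => {emptyVec}
  | j + 1 => {w | ∃ u ∈ Lev1 j, ∃ b : Bool, w = Fe H S j u b}

/-- The strong subtree `S₁`. -/
noncomputable def SS1 : Set Vec := ⋃ j ∈ Set.Iio (hgt H S), Lev1 H S j

lemma mem_SS1 {w : Vec} : w ∈ SS1 H S ↔ ∃ j, j < hgt H S ∧ w ∈ Lev1 H S j := by
  simp [SS1]

lemma Fe_len {j : ℕ} {u : Vec} {b : Bool} (hj : j + 1 < hgt H S) (hu : u.len = lv H S j) :
    (Fe H S j u b).len = lv H S (j + 1) := by
  rw [Fe]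
  split
  · next h => exact Wv_len H S h.choose_spec.1
  · refine padV_len _ ?_
    have := lv_strictMono H S (show j < j + 1 by omega) hj
    simp [hu]
    omega

lemma Fe_ge {j : ℕ} {u : Vec} {b : Bool} (hj : j + 1 < hgt H S) (hu : u.len = lv H S j) :
    vecExtend u b ≤ Fe H S j u b := by
  have hlv : lv H S j < lv H S (j + 1) := lv_strictMono H S (by omega) hj
  rw [Fe]
  split
  · next h =>
    obtain ⟨hW, htr, hbit⟩ := h.choose_spec
    have hlen := Wv_len H S hW
    refine ⟨by simp [hu, hlen]; omega, fun p hp => ?_⟩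
    simp only [vecExtend_len, hu] at hp
    rcases Nat.lt_or_ge p (lv H S j) with h1 | h1
    · rw [vecExtend_entry_lt u b (by omega)]
      have := congrArg (fun z => Vec.entry z p) htr
      simp only [truncV_entry, if_pos h1] at this
      rw [← this]
    · have hp' : p = lv H S j := by omega
      subst hp'
      have hlast := vecExtend_entry_last u b
      rw [hu] at hlast
      rw [hlast, hbit]
  · exact le_padV _ _

lemma Fe_trunc {j : ℕ} {u : Vec} {b : Bool} (hj : j + 1 < hgt H S) (hu : u.len = lv H S j) :
    truncV (Fe H S j u b) (lv H S j) = u := by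
  have hge := Fe_ge H S (b := b) hj hu
  refine Vec.eq_of (by simp [hu]) fun p hp => ?_
  simp only [truncV_len] at hp
  simp only [truncV_entry, if_pos hp]
  have := hge.2 p (by simp [hu]; omega)
  rw [← this, vecExtend_entry_lt u b (by omega)]

lemma Fe_bit {j : ℕ} {u : Vec} {b : Bool} (hj : j + 1 < hgt H S) (hu : u.len = lv H S j) :
    (Fe H S j u b).entry (lv H S j) = b := by
  have hge := Fe_ge H S (b := b) hj hu
  have := hge.2 (lv H S j) (by simp [hu])
  have hlast := vecExtend_entry_last u b
  rw [hu] at hlast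
  rw [← this, hlast]

lemma Fe_correct {j : ℕ} (hj : j + 1 < hgt H S) {w : Vec} (hw : w ∈ Wv H S (j + 1)) :
    Fe H S j (truncV w (lv H S j)) (w.entry (lv H S j)) = w := by
  have hex : ∃ w', w' ∈ Wv H S (j + 1) ∧
      truncV w' (lv H S j) = truncV w (lv H S j) ∧
      w'.entry (lv H S j) = w.entry (lv H S j) := ⟨w, hw, rfl, rfl⟩
  rw [Fe, dif_pos hex]
  obtain ⟨hW, htr, hbit⟩ := hex.choose_spec
  exact Wv_unique H S hj hW hw htr hbit

lemma L1_len : ∀ {j : ℕ} {w : Vec}, w ∈ Lev1 H S j → j < hgt H S → w.len = lv H S j := by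
  intro j
  induction j with
  | zero =>
    intro w hw hj
    rw [show w = emptyVec from hw, lv_zero]
    rfl
  | succ j ih =>
    intro w hw hj
    obtain ⟨u, hu, b, rfl⟩ := hw
    exact Fe_len H S hj (ih hu (by omega))

lemma L1_trunc : ∀ {j : ℕ}, j < hgt H S → ∀ {w : Vec}, w ∈ Lev1 H S j → ∀ {t : ℕ}, t ≤ j →
    truncV w (lv H S t) ∈ Lev1 H S t := by
  intro j
  induction j with
  | zero =>
    intro hj w hw t ht
    have ht0 : t = 0 := by omega
    subst ht0
    rw [show w = emptyVec from hw, lv_zero, truncV_zero]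
    rfl
  | succ j ih =>
    intro hj w hw t ht
    rcases Nat.eq_or_lt_of_le ht with rfl | h
    · rw [← L1_len H S hw hj, truncV_self]
      exact hw
    · obtain ⟨u, hu, b, rfl⟩ := hw
      have hjlt : j < hgt H S := by omega
      have hus : u.len = lv H S j := L1_len H S hu hjlt
      have htr : truncV (Fe H S j u b) (lv H S t) = truncV u (lv H S t) := by
        rw [← truncV_truncV (Fe H S j u b) (lv_mono_le H S (show t ≤ j by omega) hjlt),
          Fe_trunc H S hj hus]
      rw [htr]
      exact ih hjlt hu (by omega)

lemma L1_nonempty {j : ℕ} (hj : j < hgt H S) : (Lev1 H S j).Nonempty := by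
  induction j with
  | zero => exact ⟨emptyVec, rfl⟩
  | succ j ih =>
    obtain ⟨u, hu⟩ := ih (by omega)
    exact ⟨Fe H S j u false, u, hu, false, rfl⟩

lemma Wv_mem_Lev1 : ∀ {j : ℕ}, j < hgt H S → ∀ {w : Vec}, w ∈ Wv H S j → w ∈ Lev1 H S j := by
  intro j
  induction j with
  | zero =>
    intro hj w hw
    have := Wv_len H S hw
    rw [lv_zero] at this
    rw [vec_len_zero this]
    rfl
  | succ j ih =>
    intro hj w hw
    have hjlt : j < hgt H S := by omega
    have hlv : lv H S j ≤ lv H S (j + 1) := (lv_strictMono H S (by omega) hj).le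
    have hu : truncV w (lv H S j) ∈ Wv H S j := by
      obtain ⟨i, hi, m, hm, h1, h2, rfl⟩ := hw
      exact ⟨i, hi, m, hm, le_trans hlv h1, h2, truncV_truncV _ hlv⟩
    have := Fe_correct H S hj hw
    rw [← this]
    exact ⟨truncV w (lv H S j), ih hjlt hu, w.entry (lv H S j), rfl⟩

lemma L1_row_diff {t : ℕ} {w w' : Vec} (ht : t + 1 < hgt H S)
    (hw : w ∈ Lev1 H S (t + 1)) (hw' : w' ∈ Lev1 H S (t + 1))
    (htr : truncV w (lv H S t) = truncV w' (lv H S t)) (hne : w ≠ w') :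
    w.entry (lv H S t) ≠ w'.entry (lv H S t) := by
  obtain ⟨u, hu, b, rfl⟩ := hw
  obtain ⟨u', hu', b', rfl⟩ := hw'
  have htlt : t < hgt H S := by omega
  have hus := L1_len H S hu htlt
  have hus' := L1_len H S hu' htlt
  have huu : u = u' := by
    rw [← Fe_trunc H S ht hus (b := b), ← Fe_trunc H S ht hus' (b := b'), htr]
  subst huu
  have hbb : b ≠ b' := fun h => hne (by rw [h])
  rw [Fe_bit H S ht hus, Fe_bit H S ht hus]
  exact hbb

lemma SS1_meet {j j' : ℕ} {w w' : Vec} (hj : j < hgt H S) (hj' : j' < hgt H S)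
    (hw : w ∈ Lev1 H S j) (hw' : w' ∈ Lev1 H S j') :
    ∃ m ∈ SS1 H S, IsMeetIn Set.univ w w' m := by
  set P : ℕ → Prop := fun t => t ≤ min j j' ∧ truncV w (lv H S t) = truncV w' (lv H S t)
    with hPdef
  have hP0 : P 0 := ⟨Nat.zero_le _, by rw [lv_zero, truncV_zero, truncV_zero]⟩
  set c := Nat.findGreatest P (min j j') with hcdef
  have hPc : P c := Nat.findGreatest_spec (Nat.zero_le _) hP0
  have hmax : ∀ t, t ≤ min j j' → P t → t ≤ c := fun t ht hPt => Nat.le_findGreatest ht hPt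
  obtain ⟨hcle, hctr⟩ := hPc
  have hclt : c < hgt H S := by omega
  refine ⟨truncV w (lv H S c),
    mem_SS1 H S |>.mpr ⟨c, hclt, L1_trunc H S hj hw (by omega)⟩, trivial, ?_, ?_, ?_⟩
  · exact truncV_le _ (by rw [L1_len H S hw hj]; exact lv_mono_le H S (by omega) hj)
  · rw [hctr]
    exact truncV_le _ (by rw [L1_len H S hw' hj']; exact lv_mono_le H S (by omega) hj')
  · intro D _ hDw hDw'
    have hDsz : D.len ≤ lv H S c := by
      by_contra hcon
      push_neg at hcon
      have hcmin : c < min j j' := by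
        rcases Nat.lt_or_ge c (min j j') with h | h
        · exact h
        · exfalso
          have hceq : c = min j j' := by omega
          have h1 : D.len ≤ w.len := hDw.1
          have h2 : D.len ≤ w'.len := hDw'.1
          rw [L1_len H S hw hj] at h1
          rw [L1_len H S hw' hj'] at h2
          rcases Nat.le_total j j' with hjj | hjj
          · have : lv H S c = lv H S j := by rw [hceq, Nat.min_eq_left hjj]
            omega
          · have : lv H S c = lv H S j' := by rw [hceq, Nat.min_eq_right hjj]
            omega
      have hnP : ¬ P (c + 1) := fun h => by have := hmax (c + 1) (by omega) h; omega
      have hdiff : truncV w (lv H S (c + 1)) ≠ truncV w' (lv H S (c + 1)) := by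
        intro h; exact hnP ⟨by omega, h⟩
      have hc1 : c + 1 < hgt H S := by omega
      have hm1 : truncV w (lv H S (c + 1)) ∈ Lev1 H S (c + 1) :=
        L1_trunc H S hj hw (by omega)
      have hm2 : truncV w' (lv H S (c + 1)) ∈ Lev1 H S (c + 1) :=
        L1_trunc H S hj' hw' (by omega)
      have htr2 : truncV (truncV w (lv H S (c + 1))) (lv H S c) =
          truncV (truncV w' (lv H S (c + 1))) (lv H S c) := by
        rw [truncV_truncV _ (lv_mono_le H S (by omega) hc1),
          truncV_truncV _ (lv_mono_le H S (by omega) hc1), hctr]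
      have hpe := L1_row_diff H S hc1 hm1 hm2 htr2 hdiff
      have hlt1 : lv H S c < lv H S (c + 1) := lv_strictMono H S (by omega) hc1
      have e1 : (truncV w (lv H S (c + 1))).entry (lv H S c) = w.entry (lv H S c) := by
        simp [hlt1]
      have e2 : (truncV w' (lv H S (c + 1))).entry (lv H S c) = w'.entry (lv H S c) := by
        simp [hlt1]
      rw [e1, e2] at hpe
      have d1 := hDw.2 (lv H S c) (by omega)
      have d2 := hDw'.2 (lv H S c) (by omega)
      rw [← d1, ← d2] at hpe
      exact hpe rfl
    rw [le_iff_truncV]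
    refine ⟨by simpa using hDsz, ?_⟩
    rw [truncV_truncV _ hDsz]
    exact (le_iff_truncV.mp hDw).2

lemma Fe_mem_Lev1 {j : ℕ} {u : Vec} {b : Bool} (hu : u ∈ Lev1 H S j) :
    Fe H S j u b ∈ Lev1 H S (j + 1) := ⟨u, hu, b, rfl⟩

lemma lt_Fe {j : ℕ} {u : Vec} {b : Bool} (hj : j + 1 < hgt H S) (hu : u ∈ Lev1 H S j) :
    u < Fe H S j u b := by
  have hus := L1_len H S hu (by omega)
  rw [lt_iff_truncV]
  constructor
  · rw [hus, Fe_len H S hj hus]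
    exact lv_strictMono H S (by omega) hj
  · rw [hus, Fe_trunc H S hj hus]

lemma SS1_immSucc {j : ℕ} {u : Vec} {b : Bool} (hj : j + 1 < hgt H S) (hu : u ∈ Lev1 H S j) :
    IsImmSuccIn (SS1 H S) u (Fe H S j u b) := by
  refine ⟨mem_SS1 H S |>.mpr ⟨j, by omega, hu⟩,
    mem_SS1 H S |>.mpr ⟨j + 1, hj, Fe_mem_Lev1 H S hu⟩, lt_Fe H S hj hu, ?_⟩
  intro z hz h1 h2
  obtain ⟨t, ht, hzt⟩ := mem_SS1 H S |>.mp hz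
  have e1 := vecLt_len h1
  have e2 := vecLt_len h2
  rw [L1_len H S hu (by omega), L1_len H S hzt ht] at e1
  rw [L1_len H S hzt ht, Fe_len H S hj (L1_len H S hu (by omega))] at e2
  have := (lv_lt_lv_iff H S (by omega) ht).mp e1
  have := (lv_lt_lv_iff H S ht hj).mp e2
  omega

lemma SS1_immSucc_char {j : ℕ} {u c : Vec} (hj : j + 1 < hgt H S) (hu : u ∈ Lev1 H S j)
    (hc : IsImmSuccIn (SS1 H S) u c) : ∃ b : Bool, c = Fe H S j u b := by
  obtain ⟨-, hcS, hlt, hbet⟩ := hc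
  obtain ⟨t, ht, hct⟩ := mem_SS1 H S |>.mp hcS
  have hjlt : j < hgt H S := by omega
  have hst : j < t := by
    have := vecLt_len hlt
    rw [L1_len H S hu hjlt, L1_len H S hct ht] at this
    exact (lv_lt_lv_iff H S hjlt ht).mp this
  have hteq : t = j + 1 := by
    by_contra hne
    have h2 : j + 1 < t := by omega
    have hm : truncV c (lv H S (j + 1)) ∈ Lev1 H S (j + 1) := L1_trunc H S ht hct (by omega)
    have hlv1 : lv H S j < lv H S (j + 1) := lv_strictMono H S (by omega) hj
    have h3 : u < truncV c (lv H S (j + 1)) := by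
      rw [lt_iff_truncV]
      have hus := L1_len H S hu hjlt
      constructor
      · rw [hus]; simpa using hlv1
      · rw [hus, truncV_truncV _ hlv1.le]
        have := (le_iff_truncV.mp hlt.le).2
        rwa [hus] at this
    have h4 : truncV c (lv H S (j + 1)) < c := by
      rw [lt_iff_truncV]
      constructor
      · rw [L1_len H S hct ht]; simpa using lv_strictMono H S h2 ht
      · simp
    exact hbet _ (mem_SS1 H S |>.mpr ⟨j + 1, hj, hm⟩) h3 h4
  subst hteq
  obtain ⟨u', hu', b, rfl⟩ := hct
  have hus' := L1_len H S hu' hjlt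
  have hueq : u' = u := by
    have h5 : truncV (Fe H S j u' b) (lv H S j) = u' := Fe_trunc H S hj hus'
    have h6 : truncV (Fe H S j u' b) (lv H S j) = u := by
      have := (le_iff_truncV.mp hlt.le).2
      rwa [L1_len H S hu hjlt] at this
    rw [← h5, h6]
  exact ⟨b, by rw [hueq]⟩

lemma L1_levelIn {j : ℕ} {w : Vec} (hj : j < hgt H S) (hw : w ∈ Lev1 H S j) :
    levelIn (SS1 H S) w = j := by
  have hset : predsIn (SS1 H S) w = (fun t => truncV w (lv H S t)) '' Set.Iio j := by
    ext z
    constructor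
    · rintro ⟨hzS, hzw⟩
      obtain ⟨t, ht, hzt⟩ := mem_SS1 H S |>.mp hzS
      have hts : z.len = lv H S t := L1_len H S hzt ht
      have h1 : t < j := by
        have := vecLt_len hzw
        rw [hts, L1_len H S hw hj] at this
        exact (lv_lt_lv_iff H S ht hj).mp this
      refine ⟨t, h1, ?_⟩
      have := (le_iff_truncV.mp hzw.le).2
      rw [hts] at this
      exact this
    · rintro ⟨t, ht, rfl⟩
      simp only [Set.mem_Iio] at ht
      refine ⟨mem_SS1 H S |>.mpr ⟨t, by omega, L1_trunc H S hj hw (by omega)⟩, ?_⟩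
      rw [lt_iff_truncV]
      refine ⟨?_, by simp⟩
      rw [L1_len H S hw hj]
      simpa using lv_strictMono H S ht hj
  rw [levelIn, hset, Set.ncard_image_of_injOn, ← Finset.coe_range, Set.ncard_coe_finset,
    Finset.card_range]
  intro a ha b hb hab
  simp only [Set.mem_Iio] at ha hb
  have h := congrArg Vec.len hab
  simp only [truncV_len] at h
  by_contra hne
  rcases Nat.lt_or_ge a b with h' | h'
  · have := lv_strictMono H S h' (by omega); omega
  · have := lv_strictMono H S (show b < a by omega) (by omega); omega

lemma SS2_max_of {j : ℕ} {B : Mat} (hj : j + 1 = hgt H S) (hB : B ∈ Lev2 H S j) :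
    IsMaximalIn (SS2 H S) B := by
  refine ⟨mem_SS2 H S |>.mpr ⟨j, by omega, hB⟩, fun s hs hlt => ?_⟩
  obtain ⟨t, ht, hst⟩ := mem_SS2 H S |>.mp hs
  have := matLt_size hlt
  rw [L2_size H S hB (by omega), L2_size H S hst ht] at this
  have := (lv_lt_lv_iff H S (by omega) ht).mp this
  omega

lemma SS2_max_to {j : ℕ} {B : Mat} (hj : j < hgt H S) (hB : B ∈ Lev2 H S j)
    (hmax : IsMaximalIn (SS2 H S) B) : j + 1 = hgt H S := by
  by_contra hne
  have hj1 : j + 1 < hgt H S := by omega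
  exact hmax.2 (Ee H S j B (padV emptyVec (lv H S j)))
    (mem_SS2 H S |>.mpr ⟨j + 1, hj1, Ee_mem_Lev2 H S hB (by simp [padV, emptyVec])⟩)
    (lt_Ee H S hj1 hB)

lemma SS1_max_of {j : ℕ} {w : Vec} (hj : j + 1 = hgt H S) (hw : w ∈ Lev1 H S j) :
    IsMaximalIn (SS1 H S) w := by
  refine ⟨mem_SS1 H S |>.mpr ⟨j, by omega, hw⟩, fun s hs hlt => ?_⟩
  obtain ⟨t, ht, hst⟩ := mem_SS1 H S |>.mp hs
  have := vecLt_len hlt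
  rw [L1_len H S hw (by omega), L1_len H S hst ht] at this
  have := (lv_lt_lv_iff H S (by omega) ht).mp this
  omega

lemma SS1_max_to {j : ℕ} {w : Vec} (hj : j < hgt H S) (hw : w ∈ Lev1 H S j)
    (hmax : IsMaximalIn (SS1 H S) w) : j + 1 = hgt H S := by
  by_contra hne
  have hj1 : j + 1 < hgt H S := by omega
  exact hmax.2 (Fe H S j w false)
    (mem_SS1 H S |>.mpr ⟨j + 1, hj1, Fe_mem_Lev1 H S hw⟩) (lt_Fe H S hj1 hw)

lemma SS2_height : heightIn (SS2 H S) = (hgt H S : ℕ∞) := by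
  apply le_antisymm
  · refine iSup₂_le fun t ht => ?_
    obtain ⟨j, hj, hjt⟩ := mem_SS2 H S |>.mp ht
    rw [L2_levelIn H S hj hjt]
    exact_mod_cast Nat.succ_le_of_lt hj
  · obtain ⟨B, hB⟩ := L2_nonempty H S (j := hgt H S - 1) (by have := hgt_pos H S; omega)
    have hmem : B ∈ SS2 H S := mem_SS2 H S |>.mpr ⟨hgt H S - 1, by have := hgt_pos H S; omega, hB⟩
    have hlev := L2_levelIn H S (j := hgt H S - 1) (by have := hgt_pos H S; omega) hB
    have hle : (hgt H S : ℕ∞) ≤ (levelIn (SS2 H S) B : ℕ∞) + 1 := by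
      rw [hlev]
      have := hgt_pos H S
      exact_mod_cast (by omega : hgt H S ≤ (hgt H S - 1) + 1)
    exact le_trans hle (le_iSup₂ (f := fun t (_ : t ∈ SS2 H S) => (levelIn (SS2 H S) t : ℕ∞) + 1)
      B hmem)

lemma SS1_height : heightIn (SS1 H S) = (hgt H S : ℕ∞) := by
  apply le_antisymm
  · refine iSup₂_le fun t ht => ?_
    obtain ⟨j, hj, hjt⟩ := mem_SS1 H S |>.mp ht
    rw [L1_levelIn H S hj hjt]
    exact_mod_cast Nat.succ_le_of_lt hj
  · obtain ⟨w, hw⟩ := L1_nonempty H S (j := hgt H S - 1) (by have := hgt_pos H S; omega)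
    have hmem : w ∈ SS1 H S := mem_SS1 H S |>.mpr ⟨hgt H S - 1, by have := hgt_pos H S; omega, hw⟩
    have hlev := L1_levelIn H S (j := hgt H S - 1) (by have := hgt_pos H S; omega) hw
    have hle : (hgt H S : ℕ∞) ≤ (levelIn (SS1 H S) w : ℕ∞) + 1 := by
      rw [hlev]
      have := hgt_pos H S
      exact_mod_cast (by omega : hgt H S ≤ (hgt H S - 1) + 1)
    exact le_trans hle (le_iSup₂ (f := fun t (_ : t ∈ SS1 H S) => (levelIn (SS1 H S) t : ℕ∞) + 1)
      w hmem)

lemma SS2_strong : IsStrongSubtreeOf Set.univ (SS2 H S) := by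
  constructor
  · refine ⟨Set.subset_univ _, fun s hs t ht => ?_⟩
    obtain ⟨j, hj, hsj⟩ := mem_SS2 H S |>.mp hs
    obtain ⟨j', hj', htj⟩ := mem_SS2 H S |>.mp ht
    exact SS2_meet H S hj hj' hsj htj
  · refine Or.inr ⟨⟨emptyMat, emptyMat_mem_SS2 H S, fun t _ => emptyMat_le t⟩, ?_, ?_, ?_⟩
    · refine Or.inr ⟨by rw [SS2_height]; exact ENat.coe_ne_top _, fun t hmax => ?_⟩
      obtain ⟨j, hj, hjt⟩ := mem_SS2 H S |>.mp hmax.1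
      have hj1 := SS2_max_to H S hj hjt hmax
      rw [L2_levelIn H S hj hjt, SS2_height]
      exact_mod_cast hj1
    · intro s hs t ht hlev
      obtain ⟨j, hj, hsj⟩ := mem_SS2 H S |>.mp hs
      obtain ⟨j', hj', htj⟩ := mem_SS2 H S |>.mp ht
      rw [L2_levelIn H S hj hsj, L2_levelIn H S hj' htj] at hlev
      subst hlev
      rw [levelIn_univ_mat, levelIn_univ_mat, L2_size H S hsj hj, L2_size H S htj hj']
    · intro s hs hnmax t himm
      obtain ⟨j, hj, hsj⟩ := mem_SS2 H S |>.mp hs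
      have hj1 : j + 1 < hgt H S := by
        rcases Nat.lt_or_ge (j + 1) (hgt H S) with h | h
        · exact h
        · exact absurd (SS2_max_of H S (by omega) hsj) hnmax
      obtain ⟨hlt, hsz⟩ := immSucc_univ_mat.mp himm
      have hss : s.size = lv H S j := L2_size H S hsj (by omega)
      have hteq := eq_matExtend hlt.le hsz
      set v := truncV (rowOf t s.size) s.size with hvdef
      have hvlen : v.len = lv H S j := by rw [hvdef, truncV_len, hss]
      refine ⟨Ee H S j s v, ⟨SS2_immSucc H S hj1 hsj hvlen, ?_⟩, fun c hc => ?_⟩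
      · rw [hteq]
        exact Ee_ge H S hj1 hss hvlen
      · exact SS2_succ_unique H S hj1 hsj hvlen c hc.1 (hteq ▸ hc.2)

lemma SS1_strong : IsStrongSubtreeOf Set.univ (SS1 H S) := by
  constructor
  · refine ⟨Set.subset_univ _, fun s hs t ht => ?_⟩
    obtain ⟨j, hj, hsj⟩ := mem_SS1 H S |>.mp hs
    obtain ⟨j', hj', htj⟩ := mem_SS1 H S |>.mp ht
    exact SS1_meet H S hj hj' hsj htj
  · refine Or.inr ⟨⟨emptyVec, mem_SS1 H S |>.mpr ⟨0, hgt_pos H S, rfl⟩,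
      fun t _ => emptyVec_le t⟩, ?_, ?_, ?_⟩
    · refine Or.inr ⟨by rw [SS1_height]; exact ENat.coe_ne_top _, fun t hmax => ?_⟩
      obtain ⟨j, hj, hjt⟩ := mem_SS1 H S |>.mp hmax.1
      have hj1 := SS1_max_to H S hj hjt hmax
      rw [L1_levelIn H S hj hjt, SS1_height]
      exact_mod_cast hj1
    · intro s hs t ht hlev
      obtain ⟨j, hj, hsj⟩ := mem_SS1 H S |>.mp hs
      obtain ⟨j', hj', htj⟩ := mem_SS1 H S |>.mp ht
      rw [L1_levelIn H S hj hsj, L1_levelIn H S hj' htj] at hlev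
      subst hlev
      rw [levelIn_univ_vec, levelIn_univ_vec, L1_len H S hsj hj, L1_len H S htj hj']
    · intro s hs hnmax t himm
      obtain ⟨j, hj, hsj⟩ := mem_SS1 H S |>.mp hs
      have hj1 : j + 1 < hgt H S := by
        rcases Nat.lt_or_ge (j + 1) (hgt H S) with h | h
        · exact h
        · exact absurd (SS1_max_of H S (by omega) hsj) hnmax
      obtain ⟨hlt, hsz⟩ := immSucc_univ_vec.mp himm
      have hss : s.len = lv H S j := L1_len H S hsj (by omega)
      have hteq := eq_vecExtend hlt.le hsz
      set b := t.entry s.len with hbdef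
      refine ⟨Fe H S j s b, ⟨SS1_immSucc H S hj1 hsj, ?_⟩, fun c hc => ?_⟩
      · rw [hteq]
        exact Fe_ge H S hj1 hss
      · obtain ⟨b', rfl⟩ := SS1_immSucc_char H S hj1 hsj hc.1
        have h1 : (Fe H S j s b').entry (lv H S j) = b' := Fe_bit H S hj1 hss
        have h2 : t.entry s.len = (Fe H S j s b').entry s.len :=
          hc.2.2 s.len (by rw [hsz]; omega)
        rw [hss] at h2
        rw [show b' = b by rw [← h1, ← h2, hbdef, hss]]

lemma levelSet_SS1 : levelSetIn Set.univ (SS1 H S) = {n | ∃ j, j < hgt H S ∧ lv H S j = n} := by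
  ext n
  constructor
  · rintro ⟨w, hw, rfl⟩
    obtain ⟨j, hj, hjw⟩ := mem_SS1 H S |>.mp hw
    exact ⟨j, hj, by rw [levelIn_univ_vec, L1_len H S hjw hj]⟩
  · rintro ⟨j, hj, rfl⟩
    obtain ⟨w, hw⟩ := L1_nonempty H S hj
    exact ⟨w, mem_SS1 H S |>.mpr ⟨j, hj, hw⟩, by rw [levelIn_univ_vec, L1_len H S hw hj]⟩

lemma levelSet_SS2 : levelSetIn Set.univ (SS2 H S) = {n | ∃ j, j < hgt H S ∧ lv H S j = n} := by
  ext n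
  constructor
  · rintro ⟨B, hB, rfl⟩
    obtain ⟨j, hj, hjB⟩ := mem_SS2 H S |>.mp hB
    exact ⟨j, hj, by rw [levelIn_univ_mat, L2_size H S hjB hj]⟩
  · rintro ⟨j, hj, rfl⟩
    obtain ⟨B, hB⟩ := L2_nonempty H S hj
    exact ⟨B, mem_SS2 H S |>.mpr ⟨j, hj, hB⟩, by rw [levelIn_univ_mat, L2_size H S hB hj]⟩

lemma vecPair : IsVecStrongPair (SS1 H S) (SS2 H S) :=
  ⟨SS1_strong H S, SS2_strong H S, by rw [levelSet_SS1, levelSet_SS2]⟩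

lemma truncV_vrowA (A : Mat) (m : ℕ) : truncV (vrowA A m) m = vrowA A m := by
  refine Vec.eq_of rfl fun i hi => ?_
  simp only [truncV_len] at hi
  simp [hi]

lemma trunc_matOf_mem {i : ℕ} (hi : i ∈ S) :
    ∀ {j : ℕ}, j < hgt H S → lv H S j ≤ 2 * i + 1 →
      truncM (matOf H i) (lv H S j) ∈ Lev2 H S j := by
  intro j
  induction j with
  | zero =>
    intro hj hsz
    rw [lv_zero, truncM_zero]
    rfl
  | succ j ih =>
    intro hj hsz
    have hlv : lv H S j < lv H S (j + 1) := lv_strictMono H S (by omega) hj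
    have hmem := ih (by omega) (by omega)
    rw [← Ee_correct H S hj hi hsz]
    exact Ee_mem_Lev2 H S hmem (by simp)

lemma path_in_val {i : ℕ} (hi : i ∈ S) :
    ∀ {j : ℕ}, j < hgt H S → lv H S j ≤ 2 * i + 1 →
      InVal (SS1 H S) (SS2 H S) (truncM (matOf H i) (lv H S j)) := by
  intro j
  induction j with
  | zero =>
    intro hj hsz
    rw [lv_zero, truncM_zero]
    exact InVal.root emptyMat (emptyMat_mem_SS2 H S) (fun B _ => emptyMat_le B)
  | succ j ih =>
    intro hj hsz
    have hlv : lv H S j < lv H S (j + 1) := lv_strictMono H S (by omega) hj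
    have hjlt : j < hgt H S := by omega
    set A := truncM (matOf H i) (lv H S j) with hAdef
    set v := vrowA (matOf H i) (lv H S j) with hvdef
    have hAmem : A ∈ Lev2 H S j := trunc_matOf_mem H S hi hjlt (by omega)
    have hvlen : v.len = lv H S j := rfl
    have hvW : v ∈ Wv H S j :=
      ⟨i, hi, lv H S j, lv_mem H S hjlt, le_rfl, by omega, (truncV_vrowA _ _).symm⟩
    have hvS : v ∈ SS1 H S := mem_SS1 H S |>.mpr ⟨j, hjlt, Wv_mem_Lev1 H S hjlt hvW⟩
    have hEe : Ee H S j A v = truncM (matOf H i) (lv H S (j + 1)) := Ee_correct H S hj hi hsz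
    refine InVal.step A v (truncM (matOf H i) (lv H S (j + 1))) (ih hjlt (by omega)) hvS ?_ ?_ ?_
    · rw [L1_levelIn H S hjlt (Wv_mem_Lev1 H S hjlt hvW), L2_levelIn H S hjlt hAmem]
    · rw [← hEe]
      exact ⟨SS2_immSucc H S hj hAmem hvlen, Ee_ge H S hj (L2_size H S hAmem hjlt) hvlen⟩
    · intro C' hC'
      rw [← hEe]
      exact SS2_succ_unique H S hj hAmem hvlen C' hC'.1 hC'.2

lemma matOf_in_val {i : ℕ} (hi : i ∈ S) : InVal (SS1 H S) (SS2 H S) (matOf H i) := by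
  obtain ⟨j, hj, hjeq⟩ := mem_lv H S (twoI_mem_Lset H S hi)
  have := path_in_val H S hi hj (by omega)
  rwa [hjeq, show truncM (matOf H i) (2 * i + 1) = matOf H i from
    (matOf_size H i) ▸ truncM_self (matOf H i)] at this

lemma val_subset : {C | InVal (SS1 H S) (SS2 H S) C} ⊆ SS2 H S := by
  intro C hC
  induction hC with
  | root A hA _ => exact hA
  | step A v C _ _ _ hC _ _ => exact hC.1.2.1

lemma val_height_le : heightIn {C | InVal (SS1 H S) (SS2 H S) C} ≤ (hgt H S : ℕ∞) := by
  refine iSup₂_le fun t ht => ?_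
  have htS : t ∈ SS2 H S := val_subset H S ht
  obtain ⟨j, hj, hjt⟩ := mem_SS2 H S |>.mp htS
  have hsub : predsIn {C | InVal (SS1 H S) (SS2 H S) C} t ⊆ predsIn (SS2 H S) t :=
    fun x hx => ⟨val_subset H S hx.1, hx.2⟩
  have hfin : (predsIn (SS2 H S) t).Finite := by
    have hsub2 : predsIn (SS2 H S) t ⊆ (fun s => truncM t (lv H S s)) '' Set.Iio j := by
      rintro C ⟨hCS, hCB⟩
      obtain ⟨s, hs, hCs⟩ := mem_SS2 H S |>.mp hCS
      have hts : C.size = lv H S s := L2_size H S hCs hs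
      have h1 : s < j := by
        have := matLt_size hCB
        rw [hts, L2_size H S hjt hj] at this
        exact (lv_lt_lv_iff H S hs hj).mp this
      refine ⟨s, h1, ?_⟩
      have := (le_iff_truncM.mp hCB.le).2
      rw [hts] at this
      exact this
    exact Set.Finite.subset ((Set.finite_Iio j).image _) hsub2
  have hle : levelIn {C | InVal (SS1 H S) (SS2 H S) C} t ≤ levelIn (SS2 H S) t :=
    Set.ncard_le_ncard hsub hfin
  rw [L2_levelIn H S hj hjt] at hle
  exact_mod_cast (by omega : levelIn {C | InVal (SS1 H S) (SS2 H S) C} t + 1 ≤ hgt H S)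

end Levels

end EnvAux

/-- For every `k` there is `R k` such that for every 3-uniform hypergraph `H` on `ℕ` and
every set `S ⊆ ℕ` of size `k` there is a valuation tree of height at most `R k`
containing all the matrices `A^i` for `i ∈ S`. -/
theorem exists_bounded_valuation_tree_envelope (k : ℕ) :
    ∃ R : ℕ, ∀ (H : HGraph ℕ) (S : Finset ℕ), S.card = k →
      ∃ T : Set Mat, IsValTree T ∧ heightIn T ≤ (R : ℕ∞) ∧
        ∀ i ∈ S, matOf H i ∈ T := by
  refine ⟨(1 + k + k * k) + (k * (1 + k + k * k)) * (k * (1 + k + k * k)), fun H S hS => ?_⟩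
  refine ⟨{C | InVal (SS1 H S) (SS2 H S) C}, ⟨SS1 H S, SS2 H S, vecPair H S, rfl⟩, ?_, ?_⟩
  · refine le_trans (val_height_le H S) ?_
    exact_mod_cast hgt_le H S hS
  · exact fun i hi => matOf_in_val H S hi
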